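/- arXiv:1604.02503 — 11 statements merged into one kernel-verified Lean document; each statement's English description precedes it below -/
import Mathlib

section
/- For every λ > 0 and every interval I = (x-r, x+r) ∩ (0,∞) with x, r > 0, the measure m_λ(E) = ∫_E y^{2λ} dy satisfies m_λ(2I) ≥ min(2, 2^{2λ}) · m_λ(I). -/
open MeasureTheory Set Real Filter Topology

lemma hasDerivAt_maxpow {q : ℝ} (hq : 1 < q) (t : ℝ) :
    HasDerivAt (fun s => (max s 0) ^ q) (q * (max t 0) ^ (q - 1)) t := by
  rcases lt_trichotomy t 0 with ht | rfl | ht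
  · have : max t 0 = 0 := max_eq_right ht.le
    rw [this, Real.zero_rpow (by linarith), mul_zero]
    have hev : (fun s : ℝ => (max s 0) ^ q) =ᶠ[𝓝 t] fun _ => (0:ℝ)^q := by
      filter_upwards [eventually_lt_nhds ht] with s hs
      rw [max_eq_right hs.le]
    exact (hasDerivAt_const t ((0:ℝ)^q)).congr_of_eventuallyEq hev
  · rw [max_self, Real.zero_rpow (by linarith), mul_zero]
    rw [hasDerivAt_iff_tendsto_slope]
    have hb : Tendsto (fun s : ℝ => |s| ^ (q-1)) (𝓝[≠] (0:ℝ)) (𝓝 0) := by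
      have : ContinuousAt (fun s : ℝ => |s| ^ (q-1)) 0 := by
        exact (Real.continuousAt_rpow_const _ _ (Or.inr (by linarith))).comp
          (continuous_abs.continuousAt)
      have := this.continuousWithinAt (s := {(0:ℝ)}ᶜ)
      simpa [abs_zero, Real.zero_rpow (show q - 1 ≠ 0 by linarith)] using this.tendsto
    apply squeeze_zero_norm _ hb
    intro s
    rw [slope_def_field]
    simp only [max_self, Real.zero_rpow (by linarith : q ≠ 0), sub_zero]
    rcases le_or_gt s 0 with hs | hs
    · rw [max_eq_right hs, Real.zero_rpow (by linarith : q ≠ 0)]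
      simp [Real.rpow_nonneg (abs_nonneg s)]
    · rw [max_eq_left hs.le, abs_of_pos hs]
      rw [div_eq_mul_inv, ← Real.rpow_neg_one s, ← Real.rpow_add hs, Real.norm_eq_abs,
        abs_of_nonneg (Real.rpow_nonneg hs.le _), ← sub_eq_add_neg]
  · have : max t 0 = t := max_eq_left ht.le
    rw [this]
    have hev : (fun s : ℝ => (max s 0) ^ q) =ᶠ[𝓝 t] fun s => s ^ q := by
      filter_upwards [eventually_gt_nhds ht] with s hs
      rw [max_eq_left hs.le]
    exact (Real.hasDerivAt_rpow_const (Or.inl ht.ne')).congr_of_eventuallyEq hev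

lemma integral_eval {p a b : ℝ} (hp : 0 < p) (hb : 0 < b) (hab : a < b) :
    ∫ y in Ioo a b ∩ Ioi 0, y ^ p = (b ^ (p+1) - (max a 0) ^ (p+1)) / (p+1) := by
  have hset : Ioo a b ∩ Ioi 0 = Ioo (max a 0) b := by
    ext y; simp only [mem_inter_iff, mem_Ioo, mem_Ioi, max_lt_iff]; tauto
  rw [hset, ← integral_Ioc_eq_integral_Ioo, ← intervalIntegral.integral_of_le
    (by simp [hab.le, hb.le]), integral_rpow (Or.inl (by linarith))]

private lemma contOn_rpow {e : ℝ} (he : 0 ≤ e) : ContinuousOn (fun s : ℝ => s ^ e) (Icc 0 1) := by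
  intro t _
  rcases eq_or_ne t 0 with rfl | ht
  · exact (Real.continuousAt_rpow_const _ _ (Or.inr he)).continuousWithinAt
  · exact (Real.continuousAt_rpow_const _ _ (Or.inl ht)).continuousWithinAt

private lemma g_deriv {p c t : ℝ} (ht : 0 < t) :
    HasDerivAt (fun u : ℝ => p * u ^ (p-1) + c * u ^ p)
      (p * ((p-1) * t ^ (p-1-1)) + c * (p * t ^ (p-1))) t :=
  (((Real.hasDerivAt_rpow_const (p := p - 1) (Or.inl ht.ne')).const_mul p).add
    ((Real.hasDerivAt_rpow_const (p := p) (Or.inl ht.ne')).const_mul c))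

private lemma g_contOn {p c : ℝ} : ContinuousOn (fun u : ℝ => p * u ^ (p-1) + c * u ^ p) (Ioc 0 1) := by
  intro t ht
  exact (((Real.continuousAt_rpow_const _ _ (Or.inl ht.1.ne')).const_smul p).add
    ((Real.continuousAt_rpow_const _ _ (Or.inl ht.1.ne')).const_smul c)).continuousWithinAt

/-- the F-derivative -/
private lemma F_deriv {p b t : ℝ} (ht : 0 < t) :
    HasDerivAt (fun s : ℝ => (p+1)/2 * ((1-s) * (1 + s^p)) - b * (1 - s^(p+1)))
      ((p+1)/2 * ((-1) * (1 + t^p) + (1-t) * (p * t^(p-1))) - b * (-((p+1) * t^p))) t := by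
  have h1 : HasDerivAt (fun s : ℝ => (1-s) * (1 + s^p))
      ((-1) * (1 + t^p) + (1-t) * (p * t^(p-1))) t := by
    have ha : HasDerivAt (fun s : ℝ => 1 - s) (-1) t := by
      simpa using (hasDerivAt_id t).const_sub 1
    have hb : HasDerivAt (fun s : ℝ => 1 + s^p) (p * t^(p-1)) t :=
      (Real.hasDerivAt_rpow_const (Or.inl ht.ne')).const_add 1
    exact ha.mul hb
  have h2 : HasDerivAt (fun s : ℝ => 1 - s^(p+1)) (-((p+1) * t^p)) t := by
    have := (Real.hasDerivAt_rpow_const (p := p + 1) (Or.inl ht.ne')).const_sub 1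
    simpa using this
  exact (h1.const_mul ((p+1)/2)).sub (h2.const_mul b)

lemma F_nonneg {p : ℝ} (hp : 0 < p) {s : ℝ} (hs0 : 0 ≤ s) (hs1 : s ≤ 1) :
    0 ≤ (p+1)/2 * ((1-s) * (1 + s^p)) - (min 1 p) * (1 - s^(p+1)) := by
  set b := min 1 p with hbdef
  have hb1 : b ≤ 1 := min_le_left _ _
  have hbp : b ≤ p := min_le_right _ _
  set c : ℝ := 2*b - 1 - p with hcdef
  set F : ℝ → ℝ := fun s => (p+1)/2 * ((1-s) * (1 + s^p)) - b * (1 - s^(p+1)) with hFdef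
  set g : ℝ → ℝ := fun u => p * u ^ (p-1) + c * u ^ p with hgdef
  have hF1 : F 1 = 0 := by simp [hFdef, Real.one_rpow]
  have hF0 : 0 ≤ F 0 := by
    simp only [hFdef, Real.zero_rpow hp.ne', Real.zero_rpow (by linarith : p + 1 ≠ 0)]
    norm_num; linarith
  -- F' t = (p+1)/2 * (g t - 1) for t > 0
  have hFt : ∀ t : ℝ, 0 < t → HasDerivAt F ((p+1)/2 * (g t - 1)) t := by
    intro t ht
    have h := F_deriv (p := p) (b := b) ht
    have htp : t ^ p = t ^ (p-1) * t := by
      rw [← Real.rpow_add_one ht.ne' (p-1)]; ring_nf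
    convert h using 1
    simp only [hgdef, hcdef, htp]
    ring
  have hFcont : ContinuousOn F (Icc 0 1) := by
    apply ContinuousOn.sub
    · exact (continuousOn_const.mul ((continuousOn_const.sub continuousOn_id).mul
        (continuousOn_const.add (contOn_rpow hp.le))))
    · exact continuousOn_const.mul (continuousOn_const.sub (contOn_rpow (by linarith)))
  rcases le_or_gt 1 p with hple | hplt
  · -- p ≥ 1 : b = 1, c = 1 - p; g monotone on Ioc 0 1, g ≤ g 1 = 1, F antitone
    have hb : b = 1 := min_eq_left hple
    have hgmono : MonotoneOn g (Ioc 0 1) := by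
      apply monotoneOn_of_deriv_nonneg (convex_Ioc 0 1) g_contOn
      · intro t ht
        rw [interior_Ioc] at ht
        exact ((g_deriv ht.1).differentiableAt).differentiableWithinAt
      · intro t ht
        rw [interior_Ioc] at ht
        rw [(g_deriv ht.1).deriv]
        have h1 : t ^ (p-1-1) ≥ t ^ (p-1) := Real.rpow_le_rpow_of_exponent_ge ht.1 ht.2.le (by linarith)
        have h2 : (0:ℝ) ≤ p * (p-1) := mul_nonneg hp.le (by linarith)
        have : c = -(p-1) := by rw [hcdef, hb]; ring
        rw [this]
        nlinarith [Real.rpow_nonneg ht.1.le (p-1), Real.rpow_nonneg ht.1.le (p-1-1)]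
    have hganti : AntitoneOn F (Icc 0 1) := by
      apply antitoneOn_of_deriv_nonpos (convex_Icc 0 1) hFcont
      · intro t ht
        rw [interior_Icc] at ht
        exact ((hFt t ht.1).differentiableAt).differentiableWithinAt
      · intro t ht
        rw [interior_Icc] at ht
        rw [(hFt t ht.1).deriv]
        have hg1 : g t ≤ g 1 := hgmono ⟨ht.1, ht.2.le⟩ ⟨zero_lt_one, le_refl 1⟩ ht.2.le
        have hg11 : g 1 = 1 := by
          simp [hgdef, Real.one_rpow, hcdef, hb]; ring
        exact mul_nonpos_of_nonneg_of_nonpos (by linarith) (by linarith)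
    have := hganti ⟨hs0, hs1⟩ ⟨zero_le_one, le_refl 1⟩ hs1
    rw [hF1] at this
    exact this
  · -- p < 1 : b = p, c = p - 1; g antitone on Ioc 0 1
    have hb : b = p := min_eq_right hplt.le
    have hc : c = p - 1 := by rw [hcdef, hb]; ring
    have hganti : AntitoneOn g (Ioc 0 1) := by
      apply antitoneOn_of_deriv_nonpos (convex_Ioc 0 1) g_contOn
      · intro t ht
        rw [interior_Ioc] at ht
        exact ((g_deriv ht.1).differentiableAt).differentiableWithinAt
      · intro t ht
        rw [interior_Ioc] at ht
        rw [(g_deriv ht.1).deriv, hc]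
        have h2 : p * (p-1) ≤ 0 := mul_nonpos_of_nonneg_of_nonpos hp.le (by linarith)
        nlinarith [Real.rpow_nonneg ht.1.le (p-1), Real.rpow_nonneg ht.1.le (p-1-1)]
    rcases eq_or_lt_of_le hs0 with rfl | hs0'
    · exact hF0
    rcases le_or_gt (g s) 1 with hgs | hgs
    · -- F antitone on [s,1]
      have hanti : AntitoneOn F (Icc s 1) := by
        apply antitoneOn_of_deriv_nonpos (convex_Icc s 1) (hFcont.mono (Icc_subset_Icc hs0 le_rfl))
        · intro t ht
          rw [interior_Icc] at ht
          exact ((hFt t (lt_trans hs0' ht.1)).differentiableAt).differentiableWithinAt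
        · intro t ht
          rw [interior_Icc] at ht
          rw [(hFt t (lt_trans hs0' ht.1)).deriv]
          have : g t ≤ g s := hganti ⟨hs0', hs1⟩ ⟨lt_trans hs0' ht.1, ht.2.le⟩ ht.1.le
          exact mul_nonpos_of_nonneg_of_nonpos (by linarith) (by linarith)
      have := hanti ⟨le_rfl, hs1⟩ ⟨hs1, le_rfl⟩ hs1
      rw [hF1] at this; exact this
    · -- F monotone on [0,s]
      have hmono : MonotoneOn F (Icc 0 s) := by
        apply monotoneOn_of_deriv_nonneg (convex_Icc 0 s) (hFcont.mono (Icc_subset_Icc le_rfl hs1))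
        · intro t ht
          rw [interior_Icc] at ht
          exact ((hFt t ht.1).differentiableAt).differentiableWithinAt
        · intro t ht
          rw [interior_Icc] at ht
          rw [(hFt t ht.1).deriv]
          have : g s ≤ g t := hganti ⟨ht.1, (lt_of_lt_of_le ht.2 hs1).le⟩ ⟨hs0', hs1⟩ ht.2.le
          exact mul_nonneg (by linarith) (by linarith)
      have := hmono ⟨le_rfl, hs0⟩ ⟨hs0, le_rfl⟩ hs0
      exact le_trans hF0 this

lemma key_cond {p x ρ : ℝ} (hp : 0 < p) (hx : 0 < x) (hρ : 0 < ρ) :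
    min 1 p * ((x+ρ)^(p+1) - (max (x-ρ) 0)^(p+1)) ≤ ρ * ((p+1)*(x+ρ)^p + (p+1)*(max (x-ρ) 0)^p) := by
  set b := min 1 p with hbdef
  have hb1 : b ≤ 1 := min_le_left _ _
  have hbp : b ≤ p := min_le_right _ _
  have hb0 : 0 < b := lt_min zero_lt_one hp
  have hu : 0 < x + ρ := by linarith
  have hA : 0 < (x+ρ)^p := Real.rpow_pos_of_pos hu p
  have hup : (x+ρ)^(p+1) = (x+ρ)^p * (x+ρ) := by
    rw [Real.rpow_add_one hu.ne' p]
  rcases le_or_gt x ρ with hxρ | hxρ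
  · have hmax : max (x-ρ) 0 = 0 := max_eq_right (by linarith)
    rw [hmax, Real.zero_rpow (by linarith : p + 1 ≠ 0), Real.zero_rpow hp.ne', hup]
    have h1 : b * (x + ρ) ≤ (p+1) * ρ := by nlinarith
    nlinarith
  · have hv : 0 < x - ρ := by linarith
    have hmax : max (x-ρ) 0 = x - ρ := max_eq_left hv.le
    rw [hmax]
    have hB : 0 < (x-ρ)^p := Real.rpow_pos_of_pos hv p
    have hvp : (x-ρ)^(p+1) = (x-ρ)^p * (x-ρ) := by
      rw [Real.rpow_add_one hv.ne' p]
    have hs0 : 0 ≤ (x-ρ)/(x+ρ) := div_nonneg hv.le hu.le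
    have hs1 : (x-ρ)/(x+ρ) ≤ 1 := by
      rw [div_le_one hu]; linarith
    have hF := F_nonneg hp hs0 hs1
    have e1 : ((x-ρ)/(x+ρ))^p = (x-ρ)^p/(x+ρ)^p := Real.div_rpow hv.le hu.le p
    have e2 : ((x-ρ)/(x+ρ))^(p+1) = ((x-ρ)^p*(x-ρ))/((x+ρ)^p*(x+ρ)) := by
      rw [Real.div_rpow hv.le hu.le (p+1), hup, hvp]
    rw [e1, e2] at hF
    have hF' := mul_nonneg (mul_pos hA hu).le hF
    have heq : ((x+ρ)^p * (x+ρ)) * ((p+1)/2 * ((1-(x-ρ)/(x+ρ)) * (1 + (x-ρ)^p/(x+ρ)^p))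
        - b * (1 - ((x-ρ)^p*(x-ρ))/((x+ρ)^p*(x+ρ))))
        = ρ * ((p+1)*(x+ρ)^p + (p+1)*(x-ρ)^p) - b * ((x+ρ)^p*(x+ρ) - (x-ρ)^p*(x-ρ)) := by
      field_simp
      ring
    rw [heq] at hF'
    rw [hup, hvp]
    linarith

lemma crux {p x r : ℝ} (hp : 0 < p) (hx : 0 < x) (hr : 0 < r) :
    2^(min 1 p) * ((x+r)^(p+1) - (max (x-r) 0)^(p+1))
      ≤ (x+2*r)^(p+1) - (max (x-2*r) 0)^(p+1) := by
  set b := min 1 p with hbdef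
  have hb0 : 0 < b := lt_min zero_lt_one hp
  have hq : 1 < p + 1 := by linarith
  set φ : ℝ → ℝ := fun ρ => (max (x+ρ) 0)^(p+1) - (max (x-ρ) 0)^(p+1) with hφdef
  set ψ : ℝ → ℝ := fun ρ => φ ρ / ρ^b with hψdef
  have hφ' : ∀ ρ : ℝ, HasDerivAt φ
      ((p+1)*(max (x+ρ) 0)^p + (p+1)*(max (x-ρ) 0)^p) ρ := by
    intro ρ
    have h1 : HasDerivAt (fun ρ : ℝ => (max (x+ρ) 0)^(p+1))
        ((p+1) * (max (x+ρ) 0)^(p+1-1) * 1) ρ :=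
      (hasDerivAt_maxpow hq (x+ρ)).comp ρ ((hasDerivAt_id ρ).const_add x)
    have h2 : HasDerivAt (fun ρ : ℝ => (max (x-ρ) 0)^(p+1))
        ((p+1) * (max (x-ρ) 0)^(p+1-1) * (-1)) ρ :=
      (hasDerivAt_maxpow hq (x-ρ)).comp ρ ((hasDerivAt_id ρ).neg.const_add x)
    have := h1.sub h2
    simp only [add_sub_cancel_right] at h1 h2 ⊢
    exact this.congr_deriv (by simp only [add_sub_cancel_right]; ring)
  have hψ' : ∀ ρ : ℝ, 0 < ρ → HasDerivAt ψ
      ((((p+1)*(max (x+ρ) 0)^p + (p+1)*(max (x-ρ) 0)^p) * ρ^b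
        - φ ρ * (b * ρ^(b-1))) / (ρ^b)^2) ρ := by
    intro ρ hρ
    exact (hφ' ρ).div (Real.hasDerivAt_rpow_const (Or.inl hρ.ne'))
      (Real.rpow_pos_of_pos hρ b).ne'
  have hψmono : MonotoneOn ψ (Icc r (2*r)) := by
    apply monotoneOn_of_deriv_nonneg (convex_Icc r (2*r))
    · intro ρ hρ
      have hρ0 : 0 < ρ := lt_of_lt_of_le hr hρ.1
      exact ((hψ' ρ hρ0).differentiableAt).continuousAt.continuousWithinAt
    · intro ρ hρ
      rw [interior_Icc] at hρ
      have hρ0 : 0 < ρ := lt_trans hr hρ.1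
      exact ((hψ' ρ hρ0).differentiableAt).differentiableWithinAt
    · intro ρ hρ
      rw [interior_Icc] at hρ
      have hρ0 : 0 < ρ := lt_trans hr hρ.1
      rw [(hψ' ρ hρ0).deriv]
      apply div_nonneg _ (sq_nonneg _)
      have hmaxu : max (x+ρ) 0 = x + ρ := max_eq_left (by linarith)
      have hφρ : φ ρ = (x+ρ)^(p+1) - (max (x-ρ) 0)^(p+1) := by
        simp only [hφdef]; rw [hmaxu]
      have hkey := key_cond hp hx hρ0
      rw [← hbdef] at hkey
      have hρb : ρ^b = ρ^(b-1) * ρ := by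
        rw [← Real.rpow_add_one hρ0.ne' (b-1)]; ring_nf
      have hrpnn : (0:ℝ) ≤ ρ^(b-1) := Real.rpow_nonneg hρ0.le _
      rw [hφρ, hmaxu, hρb]
      have h0 : 0 ≤ ρ^(b-1) * (ρ * ((p+1)*(x+ρ)^p + (p+1)*(max (x-ρ) 0)^p)
          - b * ((x+ρ)^(p+1) - (max (x-ρ) 0)^(p+1))) := by
        apply mul_nonneg hrpnn; linarith
      nlinarith [h0]
  have hmem1 : r ∈ Icc r (2*r) := ⟨le_rfl, by linarith⟩
  have hmem2 : 2*r ∈ Icc r (2*r) := ⟨by linarith, le_rfl⟩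
  have h := hψmono hmem1 hmem2 (by linarith)
  rw [hψdef] at h
  simp only at h
  rw [div_le_div_iff₀ (Real.rpow_pos_of_pos hr b) (Real.rpow_pos_of_pos (by linarith) b)] at h
  have h2rb : (2*r)^b = 2^b * r^b := Real.mul_rpow (by norm_num) hr.le
  rw [h2rb] at h
  have hrb : 0 < r^b := Real.rpow_pos_of_pos hr b
  have h' : 2^b * φ r ≤ φ (2*r) := by
    have := le_of_mul_le_mul_right (by linarith [h] : (2^b * φ r) * r^b ≤ φ (2*r) * r^b) hrb
    exact this
  have e1 : φ r = (x+r)^(p+1) - (max (x-r) 0)^(p+1) := by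
    rw [hφdef]; simp only; rw [max_eq_left (by linarith : (0:ℝ) ≤ x + r)]
  have e2 : φ (2*r) = (x+2*r)^(p+1) - (max (x-2*r) 0)^(p+1) := by
    rw [hφdef]; simp only; rw [max_eq_left (by linarith : (0:ℝ) ≤ x + 2*r)]
  rw [e1, e2] at h'
  exact h'

theorem doubling_lower (lam x r : ℝ) (hlam : 0 < lam) (hx : 0 < x) (hr : 0 < r) :
    min 2 (2 ^ (2*lam)) * (∫ y in Ioo (x - r) (x + r) ∩ Ioi 0, y ^ (2*lam)) ≤
      ∫ y in Ioo (x - 2*r) (x + 2*r) ∩ Ioi 0, y ^ (2*lam) := by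
  have hp : 0 < 2*lam := by linarith
  rw [integral_eval hp (by linarith) (by linarith),
      integral_eval hp (by linarith) (by linarith)]
  have hmin : min (2:ℝ) (2^(2*lam)) = 2^(min 1 (2*lam)) := by
    have hm : Monotone (fun t : ℝ => (2:ℝ)^t) :=
      fun a b h => Real.rpow_le_rpow_of_exponent_le one_le_two h
    exact ((hm.map_min).trans (by rw [Real.rpow_one])).symm
  rw [hmin, mul_div_assoc']
  have hkey := crux hp hx hr
  gcongr
end

section
/- For every λ ∈ (0, 1/2] and every t ∈ (0, 1/2], one has (1+2t)^{2λ+1} - (1-2t)^{2λ+1} ≥ 2^{2λ} [(1+t)^{2λ+1} - (1-t)^{2λ+1}]. -/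
open Set

private lemma continuous_rpow_const_aux {q : ℝ} (hq : 0 < q) :
    Continuous (fun x : ℝ => x ^ q) :=
  continuous_iff_continuousAt.2 fun x => Real.continuousAt_rpow_const x q (Or.inr hq.le)

private lemma convexOn_rpow_neg_aux {r : ℝ} (hr : r < 0) :
    ConvexOn ℝ (Ioi (0:ℝ)) fun x : ℝ => x ^ r := by
  have hkey : ∀ y ∈ Ioi (0:ℝ), deriv (fun x : ℝ => x ^ r) y = r * y ^ (r - 1) := fun y hy =>
    (Real.hasDerivAt_rpow_const (Or.inl (ne_of_gt hy))).deriv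
  apply convexOn_of_deriv2_nonneg (convex_Ioi 0)
  · exact fun x hx =>
      (Real.continuousAt_rpow_const x r (Or.inl (ne_of_gt hx))).continuousWithinAt
  · rw [interior_Ioi]
    exact fun x hx =>
      (Real.hasDerivAt_rpow_const (Or.inl (ne_of_gt hx))).differentiableAt.differentiableWithinAt
  · rw [interior_Ioi]
    intro x hx
    have hev : deriv (fun x : ℝ => x ^ r) =ᶠ[nhds x] fun y : ℝ => r * y ^ (r - 1) :=
      Filter.eventuallyEq_of_mem (Ioi_mem_nhds hx) hkey
    have hdiff : DifferentiableAt ℝ (fun y : ℝ => r * y ^ (r - 1)) x :=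
      (Real.hasDerivAt_rpow_const (p := r - 1)
        (Or.inl (ne_of_gt hx))).differentiableAt.const_mul r
    exact (hdiff.congr_of_eventuallyEq hev).differentiableWithinAt
  · rw [interior_Ioi]
    intro x hx
    have hev : deriv (fun x : ℝ => x ^ r) =ᶠ[nhds x] fun y : ℝ => r * y ^ (r - 1) :=
      Filter.eventuallyEq_of_mem (Ioi_mem_nhds hx) hkey
    have h2 : HasDerivAt (fun y : ℝ => r * y ^ (r - 1)) (r * ((r - 1) * x ^ (r - 1 - 1))) x :=
      (Real.hasDerivAt_rpow_const (p := r - 1) (Or.inl (ne_of_gt hx))).const_mul r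
    have : deriv^[2] (fun x : ℝ => x ^ r) x = r * ((r - 1) * x ^ (r - 1 - 1)) := by
      show deriv (deriv fun x : ℝ => x ^ r) x = _
      rw [Filter.EventuallyEq.deriv_eq hev, h2.deriv]
    rw [this]
    have hxpos : (0:ℝ) < x ^ (r - 1 - 1) := Real.rpow_pos_of_pos hx _
    have h3 : 0 ≤ (-r) * (-(r - 1)) * x ^ (r - 1 - 1) :=
      mul_nonneg (mul_nonneg (by linarith) (by linarith)) hxpos.le
    nlinarith [h3]

private lemma four_point_aux {f : ℝ → ℝ} {s : Set ℝ} (hf : ConvexOn ℝ s f) {a b c d : ℝ}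
    (ha : a ∈ s) (hb : b ∈ s) (hc : c ∈ s) (hd : d ∈ s) (hab : a < b)
    (hac : a ≤ c) (heq : b - a = d - c) : f b - f a ≤ f d - f c := by
  rcases eq_or_lt_of_le hac with rfl | hac'
  · have : b = d := by linarith
    subst this; exact le_refl _
  have hcd : c < d := by linarith
  have hbd : b ≤ d := by linarith
  have had : a < d := lt_of_le_of_lt hac hcd
  have h1 : (f b - f a) / (b - a) ≤ (f d - f a) / (d - a) :=
    hf.secant_mono ha hb hd (ne_of_gt hab) (ne_of_gt had) hbd
  have h2 : (f a - f d) / (a - d) ≤ (f c - f d) / (c - d) :=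
    hf.secant_mono hd ha hc (ne_of_lt had) (ne_of_lt hcd) hac
  have e1 : (f a - f d) / (a - d) = (f d - f a) / (d - a) := by
    rw [← neg_sub (f d) (f a), ← neg_sub d a, neg_div_neg_eq]
  have e2 : (f c - f d) / (c - d) = (f d - f c) / (d - c) := by
    rw [← neg_sub (f d) (f c), ← neg_sub d c, neg_div_neg_eq]
  rw [e1, e2] at h2
  have h3 : (f b - f a) / (b - a) ≤ (f d - f c) / (d - c) := le_trans h1 h2
  have hba : (0:ℝ) < b - a := by linarith
  rw [div_le_div_iff₀ hba (by linarith : (0:ℝ) < d - c)] at h3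
  rw [heq] at h3
  exact le_of_mul_le_mul_right h3 (by linarith)

private lemma three_one_aux {q : ℝ} (hq0 : 0 < q) (hq1 : q ≤ 1) :
    (3:ℝ) ^ q + 1 ≤ 2 * 2 ^ q := by
  rcases eq_or_lt_of_le hq1 with rfl | hlt
  · norm_num
  · have hconc := (Real.strictConcaveOn_rpow hq0 hlt).concaveOn
    have h := hconc.2 (show (1:ℝ) ∈ Ici (0:ℝ) by norm_num)
      (show (3:ℝ) ∈ Ici (0:ℝ) by norm_num)
      (by norm_num : (0:ℝ) ≤ 1/2) (by norm_num : (0:ℝ) ≤ 1/2) (by norm_num)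
    simp only [smul_eq_mul] at h
    have e1 : ((1:ℝ)/2 * 1 + 1/2 * 3) = 2 := by norm_num
    rw [e1, Real.one_rpow] at h
    linarith

private lemma deriv_ineq_aux {q s : ℝ} (hq0 : 0 < q) (hq1 : q ≤ 1)
    (hs0 : 0 < s) (hs1 : s < 1) :
    2 * (1 + s) ^ (q - 1) + (2 - s) ^ (q - 1) ≤ 2 * (1 - s) ^ (q - 1) + (2 + s) ^ (q - 1) := by
  rcases eq_or_lt_of_le hq1 with rfl | hlt
  · norm_num
  have hr : q - 1 < 0 := by linarith
  have h1 : (1 + s) ^ (q - 1) ≤ (1 - s) ^ (q - 1) :=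
    Real.rpow_le_rpow_of_nonpos (by linarith) (by linarith) hr.le
  have h2 : (fun x : ℝ => x ^ (q - 1)) (2 - s) - (fun x : ℝ => x ^ (q - 1)) (1 - s) ≤
      (fun x : ℝ => x ^ (q - 1)) (2 + s) - (fun x : ℝ => x ^ (q - 1)) (1 + s) :=
    four_point_aux (convexOn_rpow_neg_aux hr)
      (show (1:ℝ) - s ∈ Ioi 0 by simp; linarith) (show (2:ℝ) - s ∈ Ioi 0 by simp; linarith)
      (show (1:ℝ) + s ∈ Ioi 0 by simp; linarith) (show (2:ℝ) + s ∈ Ioi 0 by simp; linarith)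
      (by linarith) (by linarith) (by ring)
  simp only at h2
  linarith

private lemma psi_nonneg_aux {q : ℝ} (hq0 : 0 < q) (hq1 : q ≤ 1) {s : ℝ}
    (hs0 : 0 ≤ s) (hs1 : s ≤ 1) :
    (2 + s) ^ q + (2 - s) ^ q ≤ 2 * (1 + s) ^ q + 2 * (1 - s) ^ q := by
  set f : ℝ → ℝ := fun x => 2 * (1 + x) ^ q + 2 * (1 - x) ^ q - (2 + x) ^ q - (2 - x) ^ q with hf
  have hD : ∀ x ∈ Ioo (0:ℝ) 1, HasDerivAt f
      (q * (2 * (1 + x) ^ (q - 1) - 2 * (1 - x) ^ (q - 1)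
        - (2 + x) ^ (q - 1) + (2 - x) ^ (q - 1))) x := by
    intro x hx
    obtain ⟨hx0, hx1⟩ := hx
    have d1 : HasDerivAt (fun x : ℝ => (1 + x) ^ q) (q * (1 + x) ^ (q - 1) * 1) x :=
      (Real.hasDerivAt_rpow_const (Or.inl (by linarith : (1:ℝ) + x ≠ 0))).comp x
        ((hasDerivAt_id x).const_add 1)
    have d2 : HasDerivAt (fun x : ℝ => (1 - x) ^ q) (q * (1 - x) ^ (q - 1) * (-1)) x :=
      (Real.hasDerivAt_rpow_const (Or.inl (by linarith : (1:ℝ) - x ≠ 0))).comp x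
        ((hasDerivAt_id x).const_sub 1)
    have d3 : HasDerivAt (fun x : ℝ => (2 + x) ^ q) (q * (2 + x) ^ (q - 1) * 1) x :=
      (Real.hasDerivAt_rpow_const (Or.inl (by linarith : (2:ℝ) + x ≠ 0))).comp x
        ((hasDerivAt_id x).const_add 2)
    have d4 : HasDerivAt (fun x : ℝ => (2 - x) ^ q) (q * (2 - x) ^ (q - 1) * (-1)) x :=
      (Real.hasDerivAt_rpow_const (Or.inl (by linarith : (2:ℝ) - x ≠ 0))).comp x
        ((hasDerivAt_id x).const_sub 2)
    have := (((d1.const_mul 2).add (d2.const_mul 2)).sub d3).sub d4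
    refine this.congr_deriv ?_
    ring
  have hcont : Continuous f := by
    have c1 : Continuous fun x : ℝ => (1 + x) ^ q :=
      (continuous_rpow_const_aux hq0).comp (continuous_const.add continuous_id)
    have c2 : Continuous fun x : ℝ => (1 - x) ^ q :=
      (continuous_rpow_const_aux hq0).comp (continuous_const.sub continuous_id)
    have c3 : Continuous fun x : ℝ => (2 + x) ^ q :=
      (continuous_rpow_const_aux hq0).comp (continuous_const.add continuous_id)
    have c4 : Continuous fun x : ℝ => (2 - x) ^ q :=
      (continuous_rpow_const_aux hq0).comp (continuous_const.sub continuous_id)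
    exact (((continuous_const.mul c1).add (continuous_const.mul c2)).sub c3).sub c4
  have hanti : AntitoneOn f (Icc 0 1) := by
    apply antitoneOn_of_deriv_nonpos (convex_Icc 0 1) hcont.continuousOn
    · rw [interior_Icc]
      exact fun x hx => ((hD x hx).differentiableAt).differentiableWithinAt
    · rw [interior_Icc]
      intro x hx
      rw [(hD x hx).deriv]
      have := deriv_ineq_aux hq0 hq1 hx.1 hx.2
      nlinarith
  have hmem_s : s ∈ Icc (0:ℝ) 1 := ⟨hs0, hs1⟩
  have hmem_1 : (1:ℝ) ∈ Icc (0:ℝ) 1 := by norm_num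
  have hstep := hanti hmem_s hmem_1 hs1
  have hf1 : f 1 = 2 * 2 ^ q - 3 ^ q - 1 := by
    show 2 * ((1:ℝ) + 1) ^ q + 2 * ((1:ℝ) - 1) ^ q - ((2:ℝ) + 1) ^ q - ((2:ℝ) - 1) ^ q = _
    norm_num [Real.zero_rpow hq0.ne', Real.one_rpow]
  have h31 := three_one_aux hq0 hq1
  have : f s ≥ 0 := by rw [hf1] at hstep; linarith
  simp only [hf] at this
  linarith

theorem ineq_case_i (lam t : ℝ) (hlam : 0 < lam) (hlam' : lam ≤ 1/2)
    (ht : 0 < t) (ht' : t ≤ 1/2) :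
    2 ^ (2*lam) * ((1 + t) ^ (2*lam + 1) - (1 - t) ^ (2*lam + 1)) ≤
      (1 + 2*t) ^ (2*lam + 1) - (1 - 2*t) ^ (2*lam + 1) := by
  set p : ℝ := 2 * lam + 1 with hp
  have hp1 : 1 < p := by simp [hp]; linarith
  have hp0 : 0 < p := by linarith
  set G : ℝ → ℝ := fun x =>
    (1 + 2*x) ^ p - (1 - 2*x) ^ p - (1/2) * ((2 + 2*x) ^ p - (2 - 2*x) ^ p) with hG
  have hq0 : 0 < p - 1 := by linarith
  have hq1 : p - 1 ≤ 1 := by simp [hp]; linarith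
  have hD : ∀ x ∈ Ioo (0:ℝ) (1/2), HasDerivAt G
      (p * (2 * (1 + 2*x) ^ (p - 1) + 2 * (1 - 2*x) ^ (p - 1)
        - (2 + 2*x) ^ (p - 1) - (2 - 2*x) ^ (p - 1))) x := by
    intro x hx
    obtain ⟨hx0, hx1⟩ := hx
    have lin1 : HasDerivAt (fun x : ℝ => 1 + 2*x) 2 x := by
      simpa using ((hasDerivAt_id x).const_mul 2).const_add 1
    have lin2 : HasDerivAt (fun x : ℝ => 1 - 2*x) (-2) x := by
      simpa using ((hasDerivAt_id x).const_mul 2).const_sub 1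
    have lin3 : HasDerivAt (fun x : ℝ => 2 + 2*x) 2 x := by
      simpa using ((hasDerivAt_id x).const_mul 2).const_add 2
    have lin4 : HasDerivAt (fun x : ℝ => 2 - 2*x) (-2) x := by
      simpa using ((hasDerivAt_id x).const_mul 2).const_sub 2
    have d1 : HasDerivAt (fun x : ℝ => (1 + 2*x) ^ p) (p * (1 + 2*x) ^ (p - 1) * 2) x :=
      by have h := Real.hasDerivAt_rpow_const (x := (1:ℝ) + 2*x) (p := p) (Or.inl (by linarith : (1:ℝ) + 2*x ≠ 0)); exact h.comp x lin1
    have d2 : HasDerivAt (fun x : ℝ => (1 - 2*x) ^ p) (p * (1 - 2*x) ^ (p - 1) * (-2)) x :=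
      by have h := Real.hasDerivAt_rpow_const (x := (1:ℝ) - 2*x) (p := p) (Or.inl (by linarith : (1:ℝ) - 2*x ≠ 0)); exact h.comp x lin2
    have d3 : HasDerivAt (fun x : ℝ => (2 + 2*x) ^ p) (p * (2 + 2*x) ^ (p - 1) * 2) x :=
      by have h := Real.hasDerivAt_rpow_const (x := (2:ℝ) + 2*x) (p := p) (Or.inl (by linarith : (2:ℝ) + 2*x ≠ 0)); exact h.comp x lin3
    have d4 : HasDerivAt (fun x : ℝ => (2 - 2*x) ^ p) (p * (2 - 2*x) ^ (p - 1) * (-2)) x :=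
      by have h := Real.hasDerivAt_rpow_const (x := (2:ℝ) - 2*x) (p := p) (Or.inl (by linarith : (2:ℝ) - 2*x ≠ 0)); exact h.comp x lin4
    have := (d1.sub d2).sub ((d3.sub d4).const_mul (1/2))
    refine this.congr_deriv ?_
    ring
  have hcont : Continuous G := by
    have hc : Continuous fun y : ℝ => y ^ p := continuous_rpow_const_aux hp0
    have c1 : Continuous fun x : ℝ => (1 + 2*x) ^ p :=
      hc.comp (continuous_const.add (continuous_const.mul continuous_id))
    have c2 : Continuous fun x : ℝ => (1 - 2*x) ^ p :=
      hc.comp (continuous_const.sub (continuous_const.mul continuous_id))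
    have c3 : Continuous fun x : ℝ => (2 + 2*x) ^ p :=
      hc.comp (continuous_const.add (continuous_const.mul continuous_id))
    have c4 : Continuous fun x : ℝ => (2 - 2*x) ^ p :=
      hc.comp (continuous_const.sub (continuous_const.mul continuous_id))
    exact (c1.sub c2).sub (continuous_const.mul (c3.sub c4))
  have hmono : MonotoneOn G (Icc 0 (1/2)) := by
    apply monotoneOn_of_deriv_nonneg (convex_Icc 0 (1/2)) hcont.continuousOn
    · rw [interior_Icc]
      exact fun x hx => ((hD x hx).differentiableAt).differentiableWithinAt
    · rw [interior_Icc]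
      intro x hx
      rw [(hD x hx).deriv]
      have hpsi := psi_nonneg_aux hq0 hq1 (s := 2*x) (by linarith [hx.1]) (by linarith [hx.2])
      nlinarith
  have hG0 : G 0 = 0 := by
    simp only [hG]
    norm_num
  have hGt : 0 ≤ G t := by
    have := hmono (show (0:ℝ) ∈ Icc (0:ℝ) (1/2) by norm_num) ⟨ht.le, ht'⟩ ht.le
    rw [hG0] at this
    exact this
  simp only [hG] at hGt
  have e3 : (2 + 2*t) ^ p = 2 ^ p * (1 + t) ^ p := by
    rw [show (2:ℝ) + 2*t = 2 * (1 + t) by ring,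
      Real.mul_rpow (by norm_num) (by linarith)]
  have e4 : (2 - 2*t) ^ p = 2 ^ p * (1 - t) ^ p := by
    rw [show (2:ℝ) - 2*t = 2 * (1 - t) by ring,
      Real.mul_rpow (by norm_num) (by linarith)]
  have e5 : (2:ℝ) ^ p = 2 ^ (2*lam) * 2 := by
    rw [hp, Real.rpow_add (by norm_num), Real.rpow_one]
  rw [e3, e4, e5] at hGt
  have : (1/2 : ℝ) * ((2 ^ (2*lam) * 2) * (1 + t) ^ p - (2 ^ (2*lam) * 2) * (1 - t) ^ p)
      = 2 ^ (2*lam) * ((1 + t) ^ p - (1 - t) ^ p) := by ring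
  rw [this] at hGt
  linarith
end

section
/- For every λ ∈ (1/2, ∞) and every t ∈ (0, 1/2], one has (1+2t)^{2λ+1} - (1-2t)^{2λ+1} ≥ 2 [(1+t)^{2λ+1} - (1-t)^{2λ+1}]. -/
lemma aux_deriv (r c d : ℝ) (hr : 1 ≤ r) (x : ℝ) :
    HasDerivAt (fun y : ℝ => (c + d*y) ^ r) (r * (c + d*x) ^ (r-1) * d) x := by
  have h1 : HasDerivAt (fun y : ℝ => c + d*y) d x := by
    simpa using ((hasDerivAt_id x).const_mul d).const_add c
  have h2 := Real.hasDerivAt_rpow_const (p := r) (x := c + d*x) (Or.inr hr)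
  have h3 := h2.comp x h1
  exact h3

lemma h_deriv (q : ℝ) (hq : 1 ≤ q) (x : ℝ) :
    HasDerivAt (fun x : ℝ => (1+x)^q + (1-x)^q)
      (q*(1+x)^(q-1) - q*(1-x)^(q-1)) x := by
  have h1 := aux_deriv q 1 1 hq x
  have h2 := aux_deriv q 1 (-1) hq x
  have h := h1.add h2
  have e1 : (fun y : ℝ => (1 + 1*y) ^ q + (1 + (-1)*y) ^ q)
      = fun x : ℝ => (1+x)^q + (1-x)^q := by
    funext y; ring_nf
  simp only [Pi.add_def] at h
  rw [e1] at h
  refine h.congr_deriv ?_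
  ring_nf

lemma h_mono (q : ℝ) (hq : 1 ≤ q) :
    MonotoneOn (fun x : ℝ => (1+x)^q + (1-x)^q) (Set.Icc (0:ℝ) 1) := by
  apply monotoneOn_of_deriv_nonneg (convex_Icc 0 1)
  · exact fun x _ => ((h_deriv q hq x).differentiableAt).continuousAt.continuousWithinAt
  · exact fun x _ => ((h_deriv q hq x).differentiableAt).differentiableWithinAt
  · intro x hx
    rw [interior_Icc] at hx
    rw [(h_deriv q hq x).deriv]
    have h1 : (1-x:ℝ)^(q-1) ≤ (1+x)^(q-1) := by
      apply Real.rpow_le_rpow (by linarith [hx.2]) (by linarith [hx.1]) (by linarith)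
    nlinarith [h1]

theorem ineq_case_ii (lam t : ℝ) (hlam : 1/2 < lam)
    (ht : 0 < t) (ht' : t ≤ 1/2) :
    2 * ((1 + t) ^ (2*lam + 1) - (1 - t) ^ (2*lam + 1)) ≤
      (1 + 2*t) ^ (2*lam + 1) - (1 - 2*t) ^ (2*lam + 1) := by
  set p : ℝ := 2*lam + 1 with hp
  have hp1 : 1 ≤ p := by simp only [hp]; linarith
  have hq1 : 1 ≤ p - 1 := by simp only [hp]; linarith
  set g : ℝ → ℝ := fun y =>
    (1 + 2*y)^p - (1 - 2*y)^p - 2*((1 + y)^p - (1 - y)^p) with hg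
  have gd : ∀ x : ℝ, HasDerivAt g
      (2*p * (((1+2*x)^(p-1) + (1-2*x)^(p-1)) - ((1+x)^(p-1) + (1-x)^(p-1)))) x := by
    intro x
    have h1 := aux_deriv p 1 2 hp1 x
    have h2 := aux_deriv p 1 (-2) hp1 x
    have h3 := aux_deriv p 1 1 hp1 x
    have h4 := aux_deriv p 1 (-1) hp1 x
    have h := (h1.sub h2).sub ((h3.sub h4).const_mul 2)
    have e1 : (fun y : ℝ => (1 + 2*y) ^ p - (1 + (-2)*y) ^ p
        - 2*((1 + 1*y) ^ p - (1 + (-1)*y) ^ p)) = g := by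
      funext y; simp only [hg]; ring_nf
    simp only [Pi.sub_def, Pi.sub_apply] at h
    rw [e1] at h
    refine h.congr_deriv ?_
    ring_nf
  have gmono : MonotoneOn g (Set.Icc (0:ℝ) (1/2)) := by
    apply monotoneOn_of_deriv_nonneg (convex_Icc 0 (1/2))
    · exact fun x _ => ((gd x).differentiableAt).continuousAt.continuousWithinAt
    · exact fun x _ => ((gd x).differentiableAt).differentiableWithinAt
    · intro x hx
      rw [interior_Icc] at hx
      rw [(gd x).deriv]
      have hm := h_mono (p-1) hq1
        (show x ∈ Set.Icc (0:ℝ) 1 from Set.mem_Icc.2 ⟨le_of_lt hx.1, by linarith [hx.2]⟩)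
        (show 2*x ∈ Set.Icc (0:ℝ) 1 from Set.mem_Icc.2 ⟨by linarith [hx.1], by linarith [hx.2]⟩)
        (show x ≤ 2*x by linarith [hx.1])
      simp only at hm
      nlinarith [hm]
  have h0 : g 0 ≤ g t := gmono (Set.mem_Icc.2 ⟨le_refl 0, by norm_num⟩)
    (Set.mem_Icc.2 ⟨le_of_lt ht, ht'⟩) (le_of_lt ht)
  have g0 : g 0 = 0 := by
    simp only [hg]
    norm_num
  rw [g0] at h0
  simp only [hg] at h0
  linarith
end

section
/- For every λ > 0 and every t ∈ (1/2, 1), one has (1+2t)^{2λ+1} ≥ min(2, 2^{2λ}) [(1+t)^{2λ+1} - (1-t)^{2λ+1}]. -/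
open Real

lemma rsuper {x y p : ℝ} (hx : 0 ≤ x) (hy : 0 ≤ y) (hp : 1 ≤ p) :
    x ^ p + y ^ p ≤ (x + y) ^ p := by
  have h := NNReal.add_rpow_le_rpow_add x.toNNReal y.toNNReal hp
  have := (NNReal.coe_le_coe).2 h
  simpa [NNReal.coe_rpow, Real.coe_toNNReal _ hx, Real.coe_toNNReal _ hy,
    Real.coe_toNNReal _ (add_nonneg hx hy)] using this

lemma rsub {x y p : ℝ} (hx : 0 ≤ x) (hy : 0 ≤ y) (hp0 : 0 ≤ p) (hp : p ≤ 1) :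
    (x + y) ^ p ≤ x ^ p + y ^ p := by
  have h := NNReal.rpow_add_le_add_rpow x.toNNReal y.toNNReal hp0 hp
  have := (NNReal.coe_le_coe).2 h
  simpa [NNReal.coe_rpow, Real.coe_toNNReal _ hx, Real.coe_toNNReal _ hy,
    Real.coe_toNNReal _ (add_nonneg hx hy)] using this

lemma sq_rpow_half (x p : ℝ) (hx : 0 ≤ x) : (x ^ 2) ^ (p/2) = x ^ p := by
  rw [← Real.rpow_natCast x 2, ← Real.rpow_mul hx]
  norm_num
  ring_nf

lemma caseA {p t : ℝ} (hp1 : 1 ≤ p) (hp2 : p ≤ 2) (ht : 1/2 ≤ t) (ht' : t ≤ 1) :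
    2 ^ (p - 1) * ((1 + t) ^ p - (1 - t) ^ p) ≤ (1 + 2*t) ^ p := by
  have h1t : (0:ℝ) ≤ 1 - t := by linarith
  have h4t : (0:ℝ) ≤ 4 * t := by linarith
  have hstep1 : (1 + t) ^ p - (1 - t) ^ p ≤ (4*t) ^ (p/2) := by
    have e1 : (1 + t) ^ p = ((1 - t)^2 + 4*t) ^ (p/2) := by
      rw [show (1 - t)^2 + 4*t = (1+t)^2 by ring, sq_rpow_half _ _ (by linarith)]
    have hsub := rsub (sq_nonneg (1 - t)) h4t (by linarith : (0:ℝ) ≤ p/2)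
      (by linarith : p/2 ≤ 1)
    rw [sq_rpow_half _ _ h1t] at hsub
    linarith [e1 ▸ hsub]
  have hpos : (0:ℝ) ≤ (4*t) ^ (p/2) := Real.rpow_nonneg h4t _
  have hstep2 : 2 ^ (p - 1) * (4*t) ^ (p/2) ≤ (1 + 2*t) ^ p := by
    have h2le : (2:ℝ) ^ (p - 1) ≤ 2 ^ (p/2) :=
      Real.rpow_le_rpow_of_exponent_le one_le_two (by linarith)
    have hmul : (2:ℝ) ^ (p/2) * (4*t) ^ (p/2) = (8*t) ^ (p/2) := by
      rw [← Real.mul_rpow (by norm_num) h4t]; ring_nf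
    have h8 : (8*t) ^ (p/2) ≤ ((1 + 2*t)^2) ^ (p/2) :=
      Real.rpow_le_rpow (by linarith) (by nlinarith [sq_nonneg (2*t - 1)]) (by linarith)
    rw [sq_rpow_half _ _ (by linarith : (0:ℝ) ≤ 1 + 2*t)] at h8
    calc 2 ^ (p - 1) * (4*t) ^ (p/2) ≤ 2 ^ (p/2) * (4*t) ^ (p/2) :=
          mul_le_mul_of_nonneg_right h2le hpos
      _ = (8*t) ^ (p/2) := hmul
      _ ≤ (1 + 2*t) ^ p := h8
  calc 2 ^ (p - 1) * ((1 + t) ^ p - (1 - t) ^ p) ≤ 2 ^ (p - 1) * (4*t) ^ (p/2) :=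
        mul_le_mul_of_nonneg_left hstep1 (Real.rpow_nonneg (by norm_num) _)
    _ ≤ (1 + 2*t) ^ p := hstep2

lemma threep (p : ℝ) (hp : 2 ≤ p) : 2 * 3 ^ p ≤ ((2:ℝ) ^ p)^2 + 2 := by
  set w : ℝ := (4:ℝ) ^ ((p-2)/9) with hw
  have hw1 : 1 ≤ w := Real.one_le_rpow (by norm_num) (by linarith)
  have hw0 : 0 ≤ w := by linarith
  have hw9 : w ^ (9:ℕ) = (4:ℝ) ^ (p-2) := by
    rw [hw, ← Real.rpow_natCast _ 9, ← Real.rpow_mul (by norm_num : (0:ℝ) ≤ 4)]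
    norm_num
  have hw8 : w ^ (8:ℕ) = (4:ℝ) ^ ((8/9) * (p-2)) := by
    rw [hw, ← Real.rpow_natCast _ 8, ← Real.rpow_mul (by norm_num : (0:ℝ) ≤ 4)]
    ring_nf
  have h34 : (3:ℝ) ≤ (4:ℝ) ^ ((8:ℝ)/9) := by
    have h9 : ((4:ℝ) ^ ((8:ℝ)/9)) ^ (9:ℕ) = 65536 := by
      rw [← Real.rpow_natCast _ 9, ← Real.rpow_mul (by norm_num : (0:ℝ) ≤ 4)]
      norm_num
    refine le_of_pow_le_pow_left₀ (n := 9) (by norm_num) (by positivity) ?_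
    rw [h9]; norm_num
  have h3w : (3:ℝ) ^ (p-2) ≤ w ^ (8:ℕ) := by
    rw [hw8]
    calc (3:ℝ) ^ (p-2) ≤ ((4:ℝ) ^ ((8:ℝ)/9)) ^ (p-2) :=
          Real.rpow_le_rpow (by norm_num) h34 (by linarith)
      _ = (4:ℝ) ^ ((8/9) * (p-2)) := by
          rw [← Real.rpow_mul (by norm_num : (0:ℝ) ≤ 4)]
  have hpoly : 9 * w ^ (8:ℕ) ≤ 8 * w ^ (9:ℕ) + 1 := by
    have key : 8 * w^(9:ℕ) - 9 * w^(8:ℕ) + 1 =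
        (w-1)^2 * (8*w^7 + 7*w^6 + 6*w^5 + 5*w^4 + 4*w^3 + 3*w^2 + 2*w + 1) := by
      ring
    nlinarith [mul_nonneg (sq_nonneg (w-1))
      (by positivity : (0:ℝ) ≤ 8*w^7 + 7*w^6 + 6*w^5 + 5*w^4 + 4*w^3 + 3*w^2 + 2*w + 1)]
  have h3p : (3:ℝ) ^ p = 9 * 3 ^ (p-2) := by
    rw [show p = 2 + (p-2) by ring, Real.rpow_add (by norm_num : (0:ℝ) < 3)]
    norm_num
  have h4p : ((2:ℝ) ^ p) ^ 2 = 16 * 4 ^ (p-2) := by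
    rw [← Real.rpow_natCast ((2:ℝ)^p) 2, ← Real.rpow_mul (by norm_num : (0:ℝ) ≤ 2),
      show (4:ℝ) = (2:ℝ)^(2:ℝ) by
        rw [show (2:ℝ) = ((2:ℕ):ℝ) by norm_num, Real.rpow_natCast]; norm_num,
      ← Real.rpow_mul (by norm_num : (0:ℝ) ≤ 2),
      show (16:ℝ) = (2:ℝ)^(4:ℝ) by
        rw [show (4:ℝ) = ((4:ℕ):ℝ) by norm_num, Real.rpow_natCast]; norm_num,
      ← Real.rpow_add (by norm_num : (0:ℝ) < 2)]
    ring_nf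
  have hfinal : 9 * (3:ℝ) ^ (p-2) ≤ 8 * 4 ^ (p-2) + 1 := by
    calc 9 * (3:ℝ) ^ (p-2) ≤ 9 * w ^ (8:ℕ) := by linarith
      _ ≤ 8 * w ^ (9:ℕ) + 1 := hpoly
      _ = 8 * 4 ^ (p-2) + 1 := by rw [hw9]
  have h4nn : (0:ℝ) ≤ (4:ℝ) ^ (p-2) := Real.rpow_nonneg (by norm_num) _
  rw [h4p]
  nlinarith [hfinal, h3p]

lemma caseB {p t : ℝ} (hp : 2 ≤ p) (ht : 1/2 ≤ t) (ht' : t ≤ 1) :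
    2 * ((1 + t) ^ p - (1 - t) ^ p) ≤ (1 + 2*t) ^ p := by
  have hp1 : (1:ℝ) ≤ p := by linarith
  set g : ℝ → ℝ := fun s => (1 + 2*s) ^ p - 2 * (1 + s) ^ p + 2 * (1 - s) ^ p with hg
  have hderiv : ∀ s : ℝ, HasDerivAt g
      (2 * (p * (1 + 2*s) ^ (p-1)) - 2 * (p * (1 + s) ^ (p-1))
        - 2 * (p * (1 - s) ^ (p-1))) s := by
    intro s
    have h1 : HasDerivAt (fun s : ℝ => (1 + 2*s) ^ p) (2 * p * (1 + 2*s) ^ (p-1)) s := by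
      have := (HasDerivAt.const_add (1:ℝ) ((hasDerivAt_id s).const_mul 2)).rpow_const
        (p := p) (Or.inr hp1)
      simpa using this
    have h2 : HasDerivAt (fun s : ℝ => (1 + s) ^ p) (1 * p * (1 + s) ^ (p-1)) s :=
      ((hasDerivAt_id s).const_add 1).rpow_const (p := p) (Or.inr hp1)
    have h3 : HasDerivAt (fun s : ℝ => (1 - s) ^ p) ((-1) * p * (1 - s) ^ (p-1)) s :=
      ((hasDerivAt_id s).const_sub 1).rpow_const (p := p) (Or.inr hp1)
    have := (h1.sub (h2.const_mul 2)).add (h3.const_mul 2)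
    exact this.congr_deriv (by ring)
  have hmono : MonotoneOn g (Set.Icc (1/2 : ℝ) 1) := by
    apply monotoneOn_of_deriv_nonneg (convex_Icc _ _)
    · exact fun s _ => (hderiv s).continuousAt.continuousWithinAt
    · exact fun s _ => ((hderiv s).differentiableAt).differentiableWithinAt
    · intro s hs
      rw [interior_Icc] at hs
      rw [(hderiv s).deriv]
      have hs1 : (0:ℝ) ≤ 1 - s := by linarith [hs.2]
      have hkey : (1 + s) ^ (p-1) + (1 - s) ^ (p-1) ≤ (1 + 2*s) ^ (p-1) := by
        have e1 : (1 - s) ^ (p-1) ≤ s ^ (p-1) :=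
          Real.rpow_le_rpow hs1 (by linarith [hs.1]) (by linarith)
        have e2 : (1 + s) ^ (p-1) + s ^ (p-1) ≤ ((1 + s) + s) ^ (p-1) :=
          rsuper (by linarith [hs.1]) (by linarith [hs.1]) (by linarith)
        rw [show (1 + s) + s = 1 + 2*s by ring] at e2
        linarith
      have hp0 : (0:ℝ) < p := by linarith
      nlinarith [hkey]
  have hstart : 0 ≤ g (1/2) := by
    have h32 : ((3:ℝ)/2) ^ p = 3 ^ p / 2 ^ p := Real.div_rpow (by norm_num) (by norm_num) p
    have h12 : ((1:ℝ)/2) ^ p = 1 / 2 ^ p := by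
      rw [Real.div_rpow (by norm_num) (by norm_num) p, Real.one_rpow]
    have h2p : (0:ℝ) < 2 ^ p := Real.rpow_pos_of_pos (by norm_num) _
    have hnum := threep p hp
    have hval : g (1/2) = ((2 ^ p)^2 - 2 * 3 ^ p + 2) / 2 ^ p := by
      simp only [hg]
      rw [show (1:ℝ) + 2*(1/2) = 2 by norm_num, show (1:ℝ) + 1/2 = 3/2 by norm_num,
        show (1:ℝ) - 1/2 = 1/2 by norm_num, h32, h12]
      field_simp
    rw [hval]
    apply div_nonneg _ h2p.le
    linarith
  have := hmono (Set.mem_Icc.2 ⟨le_refl _, by norm_num⟩) (Set.mem_Icc.2 ⟨ht, ht'⟩) ht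
  have hgt : 0 ≤ g t := le_trans hstart this
  simp only [hg] at hgt
  linarith

theorem ineq_case_iii_iv (lam t : ℝ) (hlam : 0 < lam)
    (ht : 1/2 < t) (ht' : t < 1) :
    min 2 (2 ^ (2*lam)) * ((1 + t) ^ (2*lam + 1) - (1 - t) ^ (2*lam + 1)) ≤
      (1 + 2*t) ^ (2*lam + 1) := by
  rcases le_total (2*lam) 1 with h | h
  · have hmin : min (2:ℝ) (2 ^ (2*lam)) = 2 ^ (2*lam) := by
      apply min_eq_right
      calc (2:ℝ) ^ (2*lam) ≤ 2 ^ (1:ℝ) :=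
            Real.rpow_le_rpow_of_exponent_le one_le_two h
        _ = 2 := Real.rpow_one 2
    rw [hmin]
    have hA := caseA (p := 2*lam + 1) (t := t) (by linarith) (by linarith) ht.le ht'.le
    rw [show (2*lam + 1) - 1 = 2*lam by ring] at hA
    exact hA
  · have hmin : min (2:ℝ) (2 ^ (2*lam)) = 2 := by
      apply min_eq_left
      calc (2:ℝ) = 2 ^ (1:ℝ) := (Real.rpow_one 2).symm
        _ ≤ 2 ^ (2*lam) := Real.rpow_le_rpow_of_exponent_le one_le_two h
    rw [hmin]
    exact caseB (by linarith) ht.le ht'.le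
end

section
/- For every λ > 0 and every t ∈ (0, 1/2], one has (1+2t)^{2λ+1} - (1-2t)^{2λ+1} ≤ 2^{2λ+1} [(1+t)^{2λ+1} - (1-t)^{2λ+1}]. -/
theorem tilde_ineq_small_t (lam t : ℝ) (hlam : 0 < lam)
    (ht : 0 < t) (ht' : t ≤ 1/2) :
    (1 + 2*t) ^ (2*lam + 1) - (1 - 2*t) ^ (2*lam + 1) ≤
      2 ^ (2*lam + 1) * ((1 + t) ^ (2*lam + 1) - (1 - t) ^ (2*lam + 1)) := by
  set p : ℝ := 2*lam + 1 with hpdef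
  have hp1 : 1 ≤ p := by simp only [hpdef]; linarith
  have h1 : (0:ℝ) ≤ 1 - 2*t := by linarith
  have h2 : (0:ℝ) ≤ 2 + 2*t := by linarith
  have hden : (0:ℝ) < 1 + 4*t := by linarith
  have ha : (0:ℝ) ≤ 1/(1+4*t) := by positivity
  have hb : (0:ℝ) ≤ 4*t/(1+4*t) := by positivity
  have hab : 1/(1+4*t) + 4*t/(1+4*t) = 1 := by field_simp
  have hab' : 4*t/(1+4*t) + 1/(1+4*t) = 1 := by linarith
  have hc := convexOn_rpow hp1
  have e1 := hc.2 (Set.mem_Ici.mpr h1) (Set.mem_Ici.mpr h2) ha hb hab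
  have e2 := hc.2 (Set.mem_Ici.mpr h1) (Set.mem_Ici.mpr h2) hb ha hab'
  simp only [smul_eq_mul] at e1 e2
  have arg1 : 1/(1+4*t) * (1 - 2*t) + 4*t/(1+4*t) * (2 + 2*t) = 1 + 2*t := by
    field_simp; ring
  have arg2 : 4*t/(1+4*t) * (1 - 2*t) + 1/(1+4*t) * (2 + 2*t) = 2 - 2*t := by
    field_simp; ring
  rw [arg1] at e1
  rw [arg2] at e2
  have key : (1 + 2*t) ^ p + (2 - 2*t) ^ p ≤ (1 - 2*t) ^ p + (2 + 2*t) ^ p := by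
    have hsum := add_le_add e1 e2
    have hx : 1/(1+4*t) * (1 - 2*t) ^ p + 4*t/(1+4*t) * (2 + 2*t) ^ p +
        (4*t/(1+4*t) * (1 - 2*t) ^ p + 1/(1+4*t) * (2 + 2*t) ^ p) =
        (1 - 2*t) ^ p + (2 + 2*t) ^ p := by
      field_simp; ring
    linarith [hsum, hx]
  have r1 : (2 + 2*t) ^ p = 2 ^ p * (1 + t) ^ p := by
    rw [show (2 + 2*t : ℝ) = 2 * (1 + t) by ring,
      Real.mul_rpow (by norm_num) (by linarith)]
  have r2 : (2 - 2*t) ^ p = 2 ^ p * (1 - t) ^ p := by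
    rw [show (2 - 2*t : ℝ) = 2 * (1 - t) by ring,
      Real.mul_rpow (by norm_num) (by linarith)]
  linarith [key, r1, r2]
end

section
/- For every λ > 0 and every t ∈ [1/2, 1), one has (1+2t)^{2λ+1} ≤ 2^{2λ+1} [(1+t)^{2λ+1} - (1-t)^{2λ+1}]. -/
lemma real_add_rpow_le {a b p : ℝ} (ha : 0 ≤ a) (hb : 0 ≤ b) (hp : 1 ≤ p) :
    a ^ p + b ^ p ≤ (a + b) ^ p := by
  lift a to NNReal using ha
  lift b to NNReal using hb
  have := NNReal.add_rpow_le_rpow_add a b hp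
  exact_mod_cast this

theorem tilde_ineq_large_t (lam t : ℝ) (hlam : 0 < lam)
    (ht : 1/2 ≤ t) (ht' : t < 1) :
    (1 + 2*t) ^ (2*lam + 1) ≤
      2 ^ (2*lam + 1) * ((1 + t) ^ (2*lam + 1) - (1 - t) ^ (2*lam + 1)) := by
  set p := 2*lam + 1 with hpdef
  have hp : 1 ≤ p := by nlinarith
  have h1 : (0:ℝ) ≤ 1 + 2*t := by linarith
  have h2 : (0:ℝ) ≤ 2 - 2*t := by linarith
  have key : (1 + 2*t) ^ p + (2 - 2*t) ^ p ≤ (2 + 2*t) ^ p := by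
    calc (1 + 2*t) ^ p + (2 - 2*t) ^ p ≤ ((1 + 2*t) + (2 - 2*t)) ^ p :=
          real_add_rpow_le h1 h2 hp
      _ ≤ (2 + 2*t) ^ p := by
          apply Real.rpow_le_rpow (by linarith) (by linarith) (by linarith)
  have e1 : (2 + 2*t) ^ p = 2 ^ p * (1 + t) ^ p := by
    rw [← Real.mul_rpow (by norm_num) (by linarith)]; ring_nf
  have e2 : (2 - 2*t) ^ p = 2 ^ p * (1 - t) ^ p := by
    rw [← Real.mul_rpow (by norm_num) (by linarith)]; ring_nf
  rw [e1, e2] at key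
  linarith
end

section
/- Fix α ∈ (0, 1]. The function g_α(t) := 2^{-α} - [((1+t)/(1+2t))^{α+1} - ((1-t)/(1+2t))^{α+1}] is nonnegative for all t ∈ (1/2, 1). In particular, g_1(t) = (1-2t)^2 / (2(1+2t)^2) ≥ 0. -/
lemma my_rpow_add_le (x y q : ℝ) (hx : 0 ≤ x) (hy : 0 ≤ y) (hq0 : 0 ≤ q) (hq1 : q ≤ 1) :
    (x + y) ^ q ≤ x ^ q + y ^ q := by
  have h := NNReal.rpow_add_le_add_rpow x.toNNReal y.toNNReal hq0 hq1
  rw [← NNReal.coe_le_coe] at h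
  rw [← Real.toNNReal_add hx hy] at h
  rw [NNReal.coe_add, NNReal.coe_rpow, NNReal.coe_rpow, NNReal.coe_rpow,
    Real.coe_toNNReal _ hx, Real.coe_toNNReal _ hy,
    Real.coe_toNNReal _ (add_nonneg hx hy)] at h
  exact h

theorem g_alpha_nonneg (α t : ℝ) (hα : 0 < α) (hα' : α ≤ 1)
    (ht : 1/2 < t) (ht' : t < 1) :
    0 ≤ 2 ^ (-α) - (((1 + t) / (1 + 2*t)) ^ (α + 1) - ((1 - t) / (1 + 2*t)) ^ (α + 1)) ∧
      2 ^ (-(1:ℝ)) - (((1 + t) / (1 + 2*t)) ^ ((1:ℝ) + 1) - ((1 - t) / (1 + 2*t)) ^ ((1:ℝ) + 1))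
        = (1 - 2*t) ^ 2 / (2 * (1 + 2*t) ^ 2) := by
  have hd : (0:ℝ) < 1 + 2*t := by linarith
  set a : ℝ := (1 + t) / (1 + 2*t) with ha_def
  set b : ℝ := (1 - t) / (1 + 2*t) with hb_def
  have ha : 0 < a := div_pos (by linarith) hd
  have hb : 0 < b := div_pos (by linarith) hd
  set q : ℝ := (α + 1) / 2 with hq_def
  have hq0 : 0 ≤ q := by positivity
  have hq1 : q ≤ 1 := by rw [hq_def]; linarith
  -- a^2 - b^2 ≤ 1/2
  have hab2 : a ^ 2 - b ^ 2 ≤ 1 / 2 := by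
    rw [ha_def, hb_def, div_pow, div_pow, div_sub_div_same, div_le_div_iff₀ (by positivity) two_pos]
    nlinarith [sq_nonneg (1 - 2*t)]
  have hab2' : 0 ≤ a ^ 2 - b ^ 2 := by
    rw [ha_def, hb_def, div_pow, div_pow, div_sub_div_same]
    apply div_nonneg ?_ (by positivity)
    nlinarith
  -- (x^2)^q = x^(α+1)
  have key : ∀ x : ℝ, 0 ≤ x → (x ^ 2) ^ q = x ^ (α + 1) := by
    intro x hx
    rw [← Real.rpow_natCast x 2, ← Real.rpow_mul hx]
    congr 1
    rw [hq_def]; ring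
  -- subadditivity
  have h1 : a ^ (α + 1) ≤ (a ^ 2 - b ^ 2) ^ q + b ^ (α + 1) := by
    rw [← key a ha.le, ← key b hb.le]
    calc (a ^ 2) ^ q = ((a ^ 2 - b ^ 2) + b ^ 2) ^ q := by ring_nf
      _ ≤ (a ^ 2 - b ^ 2) ^ q + (b ^ 2) ^ q :=
        my_rpow_add_le _ _ _ hab2' (by positivity) hq0 hq1
  have h2 : (a ^ 2 - b ^ 2) ^ q ≤ (2:ℝ) ^ (-α) := by
    calc (a ^ 2 - b ^ 2) ^ q ≤ (1/2 : ℝ) ^ q :=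
          Real.rpow_le_rpow hab2' hab2 hq0
      _ = (2:ℝ) ^ (-q) := by
          rw [one_div, ← Real.rpow_neg_one (2:ℝ),
            ← Real.rpow_mul (by norm_num : (0:ℝ) ≤ 2)]
          norm_num
      _ ≤ (2:ℝ) ^ (-α) := by
          apply Real.rpow_le_rpow_left_iff (by norm_num : (1:ℝ) < 2) |>.mpr
          rw [hq_def]; linarith
  constructor
  · linarith
  · have e2 : ∀ x : ℝ, 0 ≤ x → x ^ ((1:ℝ) + 1) = x ^ (2:ℕ) := by
      intro x hx
      rw [← Real.rpow_natCast x 2]; norm_num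
    rw [e2 a ha.le, e2 b hb.le]
    have : (2:ℝ) ^ (-(1:ℝ)) = 1/2 := by
      rw [Real.rpow_neg_one]; norm_num
    rw [this, ha_def, hb_def, div_pow, div_pow]
    field_simp
    ring
end

section
/- The function h(λ) := 2^{2λ+1} - 2[(3/2)^{2λ+1} - (1/2)^{2λ+1}] satisfies h(λ) ≤ 0 for all λ ∈ [0, 1/2] and h(λ) ≥ 0 for all λ ∈ [1/2, ∞), with h(0) = h(1/2) = 0. -/
open Real

/-- Two-term Hölder inequality, from weighted AM–GM. -/
lemma holder2 (θ a b c d : ℝ) (hθ0 : 0 ≤ θ) (hθ1 : θ ≤ 1)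
    (ha : 0 < a) (hb : 0 < b) (hc : 0 < c) (hd : 0 < d) :
    a ^ θ * b ^ (1 - θ) + c ^ θ * d ^ (1 - θ) ≤ (a + c) ^ θ * (b + d) ^ (1 - θ) := by
  have hS : 0 < a + c := by linarith
  have hT : 0 < b + d := by linarith
  have h1 : (a/(a+c)) ^ θ * (b/(b+d)) ^ (1-θ) ≤ θ * (a/(a+c)) + (1-θ) * (b/(b+d)) :=
    Real.geom_mean_le_arith_mean2_weighted hθ0 (by linarith) (by positivity) (by positivity)
      (by ring)
  have h2 : (c/(a+c)) ^ θ * (d/(b+d)) ^ (1-θ) ≤ θ * (c/(a+c)) + (1-θ) * (d/(b+d)) :=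
    Real.geom_mean_le_arith_mean2_weighted hθ0 (by linarith) (by positivity) (by positivity)
      (by ring)
  rw [Real.div_rpow ha.le hS.le, Real.div_rpow hb.le hT.le, div_mul_div_comm] at h1
  rw [Real.div_rpow hc.le hS.le, Real.div_rpow hd.le hT.le, div_mul_div_comm] at h2
  have hSp : 0 < (a+c) ^ θ * (b+d) ^ (1-θ) := by positivity
  rw [div_le_iff₀ hSp] at h1 h2
  have e1 : θ * (a/(a+c)) + (1-θ) * (b/(b+d)) + (θ * (c/(a+c)) + (1-θ) * (d/(b+d))) = 1 := by
    field_simp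
    ring
  nlinarith [h1, h2, hSp]

/-- `x^u * (x^2)^v = x^(u+2v)` for positive `x`. -/
lemma rpow_comb {x : ℝ} (hx : 0 < x) (u v : ℝ) :
    x ^ u * (x ^ (2:ℝ)) ^ v = x ^ (u + 2 * v) := by
  rw [← Real.rpow_mul hx.le, ← Real.rpow_add hx]

lemma sq_rpow : ((4:ℝ) ^ (2:ℝ) = 16) ∧ ((2:ℝ) ^ (2:ℝ) = 4) ∧ ((3:ℝ) ^ (2:ℝ) = 9) ∧
    ((18:ℝ) ^ (2:ℝ) = 324) := by
  rw [show (2:ℝ) = ((2:ℕ):ℝ) by norm_num]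
  rw [Real.rpow_natCast, Real.rpow_natCast, Real.rpow_natCast, Real.rpow_natCast]
  norm_num

lemma key_le {t : ℝ} (h1 : 1 ≤ t) (h2 : t ≤ 2) : (4:ℝ) ^ t + 2 ≤ 2 * 3 ^ t := by
  set θ := 2 - t with hθ
  have hθ0 : 0 ≤ θ := by linarith
  have hθ1 : θ ≤ 1 := by linarith
  have e4 : (4:ℝ) ^ t = 4 ^ θ * 16 ^ (1-θ) := by
    rw [show (16:ℝ) = 4 ^ (2:ℝ) by rw [sq_rpow.1], rpow_comb (by norm_num : (0:ℝ) < 4)]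
    congr 1; ring
  have e2 : (2:ℝ) = 2 ^ θ * 2 ^ (1-θ) := by
    rw [← Real.rpow_add (by norm_num : (0:ℝ) < 2)]
    norm_num
  have e3 : 2 * (3:ℝ) ^ t = 6 ^ θ * 18 ^ (1-θ) := by
    have : (3:ℝ) ^ t = 3 ^ θ * 9 ^ (1-θ) := by
      rw [show (9:ℝ) = 3 ^ (2:ℝ) by rw [sq_rpow.2.2.1], rpow_comb (by norm_num : (0:ℝ) < 3)]
      congr 1; ring
    rw [this, e2, show (6:ℝ) = 2*3 by norm_num, show (18:ℝ) = 2*9 by norm_num,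
      Real.mul_rpow (by norm_num) (by norm_num), Real.mul_rpow (by norm_num) (by norm_num)]
    ring
  calc (4:ℝ) ^ t + 2 = 4 ^ θ * 16 ^ (1-θ) + 2 ^ θ * 2 ^ (1-θ) := by rw [e4, ← e2]
    _ ≤ (4+2) ^ θ * (16+2) ^ (1-θ) :=
        holder2 θ 4 16 2 2 hθ0 hθ1 (by norm_num) (by norm_num) (by norm_num) (by norm_num)
    _ = 2 * 3 ^ t := by rw [show (4:ℝ)+2 = 6 by norm_num, show (16:ℝ)+2 = 18 by norm_num, e3]

lemma key_ge {t : ℝ} (h2 : 2 ≤ t) : 2 * (3:ℝ) ^ t ≤ 4 ^ t + 2 := by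
  rcases eq_or_lt_of_le h2 with h | h
  · rw [← h, sq_rpow.1, sq_rpow.2.2.1]; norm_num
  · have ht1 : (0:ℝ) < t - 1 := by linarith
    set θ := (t-2)/(t-1) with hθ
    have hθ0 : 0 ≤ θ := div_nonneg (by linarith) ht1.le
    have hθ1 : θ ≤ 1 := by rw [div_le_one ht1]; linarith
    have hθm : θ * (t-1) = t - 2 := div_mul_cancel₀ _ ht1.ne'
    have h4t : (0:ℝ) < 4 ^ t := Real.rpow_pos_of_pos (by norm_num) t
    have hX : (0:ℝ) < 4 ^ t + 2 := by linarith
    -- Hölder at exponents 1 and t, mixed to exponent 2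
    have e4 : (16:ℝ) = 4 ^ θ * (4 ^ t) ^ (1-θ) := by
      rw [← Real.rpow_one (4:ℝ), ← Real.rpow_mul (by norm_num : (0:ℝ) ≤ 4),
        Real.rpow_one, ← Real.rpow_mul (by norm_num : (0:ℝ) ≤ 4),
        ← Real.rpow_add (by norm_num : (0:ℝ) < 4)]
      rw [show (1:ℝ) * θ + t * (1-θ) = 2 by linear_combination -hθm]
      rw [← sq_rpow.1]
    have e2 : (2:ℝ) = 2 ^ θ * 2 ^ (1-θ) := by
      rw [← Real.rpow_add (by norm_num : (0:ℝ) < 2)]; norm_num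
    have hold : (18:ℝ) ≤ 6 ^ θ * (4 ^ t + 2) ^ (1-θ) := by
      calc (18:ℝ) = 4 ^ θ * (4 ^ t) ^ (1-θ) + 2 ^ θ * 2 ^ (1-θ) := by
            rw [← e4, ← e2]; norm_num
        _ ≤ (4 + 2) ^ θ * (4 ^ t + 2) ^ (1-θ) :=
            holder2 θ 4 (4 ^ t) 2 2 hθ0 hθ1 (by norm_num) h4t (by norm_num) (by norm_num)
        _ = 6 ^ θ * (4 ^ t + 2) ^ (1-θ) := by norm_num
    -- raise to the power (t-1)
    have hraise : (18:ℝ) ^ (t-1) ≤ (6 ^ θ * (4 ^ t + 2) ^ (1-θ)) ^ (t-1) :=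
      Real.rpow_le_rpow (by norm_num) hold ht1.le
    rw [Real.mul_rpow (by positivity) (by positivity),
      ← Real.rpow_mul (by norm_num : (0:ℝ) ≤ 6),
      ← Real.rpow_mul hX.le] at hraise
    rw [hθm, show (1-θ) * (t-1) = 1 by linear_combination -hθm,
      Real.rpow_one] at hraise
    -- 18^(t-1) = 6^(t-2) * (2 * 3^t)
    have e18 : (18:ℝ) ^ (t-1) = 6 ^ (t-2) * (2 * 3 ^ t) := by
      rw [show t - 1 = (t-2) + 1 by ring, Real.rpow_add (by norm_num : (0:ℝ) < 18),
        Real.rpow_one, show (18:ℝ) = 6 * 3 by norm_num,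
        Real.mul_rpow (by norm_num) (by norm_num),
        show t - 2 = t + (-2) by ring, Real.rpow_add (by norm_num : (0:ℝ) < 3)]
      have : (3:ℝ) ^ (-2:ℝ) = 1/9 := by
        rw [Real.rpow_neg (by norm_num), sq_rpow.2.2.1]; norm_num
      rw [this]; ring
    rw [e18] at hraise
    have h6 : (0:ℝ) < 6 ^ (t-2) := Real.rpow_pos_of_pos (by norm_num) _
    exact le_of_mul_le_mul_left hraise h6

theorem h_sign (lam : ℝ) :
    (0 ≤ lam → lam ≤ 1/2 →
      2 ^ (2*lam + 1) - 2 * ((3/2 : ℝ) ^ (2*lam + 1) - (1/2 : ℝ) ^ (2*lam + 1)) ≤ 0) ∧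
    (1/2 ≤ lam →
      0 ≤ 2 ^ (2*lam + 1) - 2 * ((3/2 : ℝ) ^ (2*lam + 1) - (1/2 : ℝ) ^ (2*lam + 1))) ∧
    (2 : ℝ) ^ (2*(0:ℝ) + 1) - 2 * ((3/2 : ℝ) ^ (2*(0:ℝ) + 1) - (1/2 : ℝ) ^ (2*(0:ℝ) + 1)) = 0 ∧
    (2 : ℝ) ^ (2*(1/2:ℝ) + 1) - 2 * ((3/2 : ℝ) ^ (2*(1/2:ℝ) + 1) - (1/2 : ℝ) ^ (2*(1/2:ℝ) + 1)) = 0 := by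
  have h2t : (0:ℝ) < 2 ^ (2*lam+1) := Real.rpow_pos_of_pos (by norm_num) _
  have e32 : (3/2:ℝ) ^ (2*lam+1) = 3 ^ (2*lam+1) / 2 ^ (2*lam+1) :=
    Real.div_rpow (by norm_num) (by norm_num) _
  have e12 : (1/2:ℝ) ^ (2*lam+1) = 1 / 2 ^ (2*lam+1) := by
    rw [Real.div_rpow (by norm_num) (by norm_num), Real.one_rpow]
  have e4 : (4:ℝ) ^ (2*lam+1) = 2 ^ (2*lam+1) * 2 ^ (2*lam+1) := by
    rw [show (4:ℝ) = 2*2 by norm_num, Real.mul_rpow (by norm_num) (by norm_num)]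
  refine ⟨?_, ?_, ?_, ?_⟩
  · intro h0 h12
    have hk := key_le (t := 2*lam+1) (by linarith) (by linarith)
    rw [e32, e12, div_sub_div_same, sub_nonpos]
    rw [mul_div_assoc', le_div_iff₀ h2t]
    nlinarith [hk, e4]
  · intro h12
    have hk := key_ge (t := 2*lam+1) (by linarith)
    rw [e32, e12, div_sub_div_same, sub_nonneg]
    rw [mul_div_assoc', div_le_iff₀ h2t]
    nlinarith [hk, e4]
  · rw [show 2*(0:ℝ) + 1 = 1 by norm_num, Real.rpow_one, Real.rpow_one, Real.rpow_one]
    norm_num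
  · rw [show 2*(1/2:ℝ) + 1 = 2 by norm_num, sq_rpow.2.1]
    have a : (3/2:ℝ) ^ (2:ℝ) = 9/4 := by
      rw [Real.div_rpow (by norm_num) (by norm_num), sq_rpow.2.1, sq_rpow.2.2.1]
    have b : (1/2:ℝ) ^ (2:ℝ) = 1/4 := by
      rw [Real.div_rpow (by norm_num) (by norm_num), sq_rpow.2.1, Real.one_rpow]
    rw [a, b]; norm_num
end

section
/- For λ > 0, the measure m_λ(E) = ∫_E y^{2λ} dy on (0,∞) is not uniformly 2-doubling for the factor min: there exist intervals I ⊂ (0,∞) with m_λ(2I) < 2 m_λ(I). Concretely, for λ ∈ (0, 1/2] and any x > 0, m_λ(I(x, x)) ≤ 2 m_λ(I(x, x/2)). -/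
open MeasureTheory Set

private lemma chord_aux (a t : ℝ) (ha : 0 < a) (ht0 : 0 ≤ t) (ht1 : t ≤ 1) :
    a ^ t ≤ 1 + t * (a - 1) := by
  have h := convexOn_exp.2 (mem_univ (0:ℝ)) (mem_univ (Real.log a))
    (by linarith : (0:ℝ) ≤ 1 - t) ht0 (by ring)
  rw [Real.rpow_def_of_pos ha]
  simp only [smul_eq_mul, mul_zero, zero_add, Real.exp_zero, Real.exp_log ha] at h
  calc Real.exp (Real.log a * t) ≤ (1-t)*1 + t*a := by rw [mul_comm]; exact h
    _ = 1 + t*(a-1) := by ring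

private lemma key_aux (s : ℝ) (hs0 : 0 ≤ s) (hs1 : s ≤ 1) :
    (4:ℝ) ^ (1+s) ≤ 2 * 3 ^ (1+s) - 2 := by
  have h1 : ((4:ℝ)/3) ^ s ≤ 1 + s/3 := by
    have := chord_aux (4/3) s (by norm_num) hs0 hs1
    linarith
  have h2 : (3:ℝ) ^ (1-s) ≤ 3 - 2*s := by
    have := chord_aux 3 (1-s) (by norm_num) (by linarith) (by linarith)
    linarith
  have h3 : (3:ℝ) ^ s * 3 ^ (1-s) = 3 := by
    rw [← Real.rpow_add (by norm_num)]
    norm_num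
  have h4 : (4:ℝ) ^ (1+s) = 4 * (3 ^ s * (4/3) ^ s) := by
    rw [← Real.mul_rpow (by norm_num) (by norm_num)]
    rw [Real.rpow_add (by norm_num), Real.rpow_one]
    norm_num
  have h5 : (3:ℝ) ^ (1+s) = 3 * 3 ^ s := by
    rw [Real.rpow_add (by norm_num), Real.rpow_one]
  have p1 : (0:ℝ) < (3:ℝ) ^ s := Real.rpow_pos_of_pos (by norm_num) _
  have p2 : (0:ℝ) < (3:ℝ) ^ (1-s) := Real.rpow_pos_of_pos (by norm_num) _
  have p3 : (0:ℝ) < ((4:ℝ)/3) ^ s := Real.rpow_pos_of_pos (by norm_num) _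
  rw [h4, h5]
  nlinarith [mul_le_mul_of_nonneg_left h1 (le_of_lt p1),
    mul_le_mul_of_nonneg_left h2 (le_of_lt p1),
    mul_pos p1 p2, mul_nonneg hs0 (le_of_lt p1)]

theorem reverse_doubling_sharp (lam x : ℝ) (hlam : 0 < lam) (hlam' : lam ≤ 1/2)
    (hx : 0 < x) :
    (∫ y in Ioo (x - x) (x + x) ∩ Ioi 0, y ^ (2*lam)) ≤
      2 * ∫ y in Ioo (x - x/2) (x + x/2) ∩ Ioi 0, y ^ (2*lam) := by
  set q : ℝ := 2*lam + 1 with hqdef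
  have hq : (0:ℝ) < q := by simp only [hqdef]; linarith
  have e1 : Ioo (x - x) (x + x) ∩ Ioi 0 = Ioo 0 (2*x) := by
    rw [inter_eq_left.mpr]
    · congr 1 <;> ring
    · rw [sub_self]; exact Ioo_subset_Ioi_self
  have e2 : Ioo (x - x/2) (x + x/2) ∩ Ioi 0 = Ioo (x/2) (3*x/2) := by
    rw [inter_eq_left.mpr]
    · congr 1 <;> ring
    · exact Ioo_subset_Ioi_self.trans (Ioi_subset_Ioi (by linarith))
  rw [e1, e2]
  have i1 : (∫ y in Ioo (0:ℝ) (2*x), y ^ (2*lam)) =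
      ((2*x) ^ q - 0 ^ q) / q := by
    rw [← integral_Ioc_eq_integral_Ioo, ← intervalIntegral.integral_of_le (by linarith)]
    exact integral_rpow (Or.inl (by linarith))
  have i2 : (∫ y in Ioo (x/2) (3*x/2), y ^ (2*lam)) =
      ((3*x/2) ^ q - (x/2) ^ q) / q := by
    rw [← integral_Ioc_eq_integral_Ioo, ← intervalIntegral.integral_of_le (by linarith)]
    exact integral_rpow (Or.inl (by linarith))
  rw [i1, i2]
  have hz : (0:ℝ) ^ q = 0 := Real.zero_rpow hq.ne'
  have hxq : (0:ℝ) < x ^ q := Real.rpow_pos_of_pos hx _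
  have A : (2*x) ^ q = 2 ^ q * x ^ q := Real.mul_rpow (by norm_num) hx.le
  have B : (3*x/2) ^ q = (3/2) ^ q * x ^ q := by
    rw [show 3*x/2 = (3/2)*x by ring, Real.mul_rpow (by norm_num) hx.le]
  have C : (x/2) ^ q = (1/2) ^ q * x ^ q := by
    rw [show x/2 = (1/2)*x by ring, Real.mul_rpow (by norm_num) hx.le]
  have h2q : (0:ℝ) < (2:ℝ) ^ q := Real.rpow_pos_of_pos (by norm_num) _
  have main : (2:ℝ) ^ q ≤ 2 * ((3/2) ^ q - (1/2) ^ q) := by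
    have m1 : (2:ℝ) ^ q * 2 ^ q = 4 ^ q := by
      rw [← Real.mul_rpow (by norm_num) (by norm_num)]; norm_num
    have m2 : ((3:ℝ)/2) ^ q * 2 ^ q = 3 ^ q := by
      rw [← Real.mul_rpow (by norm_num) (by norm_num)]; norm_num
    have m3 : ((1:ℝ)/2) ^ q * 2 ^ q = 1 := by
      rw [← Real.mul_rpow (by norm_num) (by norm_num)]; norm_num
    have k' : (4:ℝ) ^ q ≤ 2 * 3 ^ q - 2 := by
      rw [show q = 1 + 2*lam by rw [hqdef]; ring]
      exact key_aux (2*lam) (by linarith) (by linarith)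
    apply le_of_mul_le_mul_right _ h2q
    calc (2:ℝ) ^ q * 2 ^ q = 4 ^ q := m1
      _ ≤ 2 * 3 ^ q - 2 := k'
      _ = 2 * ((3/2) ^ q * 2 ^ q) - 2 * ((1/2) ^ q * 2 ^ q) := by rw [m2, m3]; ring
      _ = 2 * ((3/2) ^ q - (1/2) ^ q) * 2 ^ q := by ring
  rw [hz, A, B, C]
  rw [show 2 * (((3/2) ^ q * x ^ q - (1/2) ^ q * x ^ q) / q)
      = (2 * ((3/2) ^ q - (1/2) ^ q) * x ^ q) / q by ring]
  gcongr ?_ / q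
  have := mul_le_mul_of_nonneg_right main hxq.le
  linarith
end

section
/- For λ > 0, with x = N+1, y = N, r = 1, the symmetric difference measure m_λ(I(N+1,1) \ I(N,1)) = ∫_{N+1}^{N+2} t^{2λ} dt ≥ (N+1)^{2λ}, which tends to infinity as N → ∞. Consequently there is no constant C and ε₀ ∈ (0,1) such that m_λ(I(x,r) \ I(y,r)) + m_λ(I(y,r) \ I(x,r)) ≤ C (|x-y|/r)^{ε₀} for all x, y ∈ (0,∞) and |x-y| ≤ r ≤ 1. -/
open MeasureTheory Set Filter

private lemma rpow_int_on (lam : ℝ) {a b : ℝ} (ha : 0 < a) :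
    IntegrableOn (fun t : ℝ => t ^ (2*lam)) (Icc a b) := by
  apply ContinuousOn.integrableOn_Icc
  intro t ht
  exact (Real.continuousAt_rpow_const t (2*lam)
    (Or.inl (ne_of_gt (lt_of_lt_of_le ha ht.1)))).continuousWithinAt

private lemma key (lam : ℝ) (hlam : 0 < lam) :
    ∀ N : ℝ, 0 ≤ N → (N + 1) ^ (2*lam) ≤ ∫ t in Ioo (N + 1) (N + 2), t ^ (2*lam) := by
  intro N hN
  have h1 : (0:ℝ) < N + 1 := by linarith
  have hint : IntegrableOn (fun t : ℝ => t ^ (2*lam)) (Ioo (N+1) (N+2)) :=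
    (rpow_int_on lam h1).mono_set Ioo_subset_Icc_self
  have := setIntegral_ge_of_const_le (c := (N+1) ^ (2*lam)) measurableSet_Ioo
    (by simp [Real.volume_Ioo]) ?_ hint
  · have hvol : (volume (Ioo (N+1) (N+2))).toReal = 1 := by
      rw [Real.volume_Ioo]; norm_num
    rw [measureReal_def, hvol, smul_eq_mul, one_mul] at this
    exact this
  · intro t ht
    exact Real.rpow_le_rpow (le_of_lt h1) (le_of_lt ht.1) (by positivity)

theorem not_uniformly_continuous_measure (lam : ℝ) (hlam : 0 < lam) :
    (∀ N : ℝ, 0 ≤ N → (N + 1) ^ (2*lam) ≤ ∫ t in Ioo (N + 1) (N + 2), t ^ (2*lam)) ∧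
    Tendsto (fun N : ℝ => ∫ t in Ioo (N + 1) (N + 2), t ^ (2*lam)) atTop atTop ∧
    ¬ ∃ C ε₀ : ℝ, 0 < C ∧ ε₀ ∈ Ioo (0:ℝ) 1 ∧
      ∀ x y r : ℝ, 0 < x → 0 < y → 0 < r → |x - y| ≤ r → r ≤ 1 →
        (∫ t in (Ioo (x - r) (x + r) ∩ Ioi 0) \ (Ioo (y - r) (y + r) ∩ Ioi 0), t ^ (2*lam)) +
          (∫ t in (Ioo (y - r) (y + r) ∩ Ioi 0) \ (Ioo (x - r) (x + r) ∩ Ioi 0), t ^ (2*lam)) ≤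
            C * (|x - y| / r) ^ ε₀ := by
  have hbase : Tendsto (fun N : ℝ => (N + 1) ^ (2*lam)) atTop atTop :=
    (tendsto_rpow_atTop (by linarith)).comp (tendsto_atTop_add_const_right _ 1 tendsto_id)
  refine ⟨key lam hlam, ?_, ?_⟩
  · apply tendsto_atTop_mono' _ _ hbase
    filter_upwards [eventually_ge_atTop (0:ℝ)] with N hN
    exact key lam hlam N hN
  · rintro ⟨C, ε₀, hC, hε, h⟩
    obtain ⟨N, hN1, hNC⟩ : ∃ N : ℝ, 1 ≤ N ∧ C < (N + 1) ^ (2*lam) := by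
      obtain ⟨N, hN⟩ := ((hbase.eventually_gt_atTop C).and (eventually_ge_atTop (1:ℝ))).exists
      exact ⟨N, hN.2, hN.1⟩
    have hx : (0:ℝ) < N + 1 := by linarith
    have hspec := h (N+1) N 1 hx (by linarith) one_pos (by simp) le_rfl
    have hset1 : (Ioo ((N+1) - 1) ((N+1) + 1) ∩ Ioi 0) = Ioo N (N+2) := by
      have : (N:ℝ) + 1 - 1 = N := by ring
      rw [this, inter_eq_left.2]
      · ring_nf
      · intro t ht; exact lt_trans (by linarith) ht.1
    -- first term lower bound
    have hnn : 0 ≤ᵐ[volume.restrict (Ioo N (N+2))] fun t : ℝ => t ^ (2*lam) := by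
      filter_upwards [ae_restrict_mem measurableSet_Ioo] with t ht
      exact Real.rpow_nonneg (le_of_lt (lt_of_le_of_lt (by linarith) ht.1)) _
    have hintbig : IntegrableOn (fun t : ℝ => t ^ (2*lam)) (Ioo N (N+2)) :=
      (rpow_int_on lam (by linarith : (0:ℝ) < N)).mono_set Ioo_subset_Icc_self
    have hsub : Ioo (N+1) (N+2) ⊆
        (Ioo ((N+1) - 1) ((N+1) + 1) ∩ Ioi 0) \ (Ioo (N - 1) (N + 1) ∩ Ioi 0) := by
      rw [hset1]
      intro t ht
      refine ⟨⟨by linarith [ht.1], ht.2⟩, ?_⟩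
      rintro ⟨ht2, -⟩
      exact absurd ht2.2 (not_lt.2 (le_of_lt ht.1))
    have hsubbig : (Ioo ((N+1) - 1) ((N+1) + 1) ∩ Ioi 0) \ (Ioo (N - 1) (N + 1) ∩ Ioi 0)
        ⊆ Ioo N (N+2) := by rw [hset1]; exact diff_subset
    have hlow : ∫ t in Ioo (N+1) (N+2), t ^ (2*lam) ≤
        ∫ t in (Ioo ((N+1) - 1) ((N+1) + 1) ∩ Ioi 0) \ (Ioo (N - 1) (N + 1) ∩ Ioi 0),
          t ^ (2*lam) := by
      apply setIntegral_mono_set (hintbig.mono_set hsubbig) _ (HasSubset.Subset.eventuallyLE hsub)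
      filter_upwards [ae_restrict_mem ((measurableSet_Ioo.inter measurableSet_Ioi).diff
        (measurableSet_Ioo.inter measurableSet_Ioi))] with t ht
      exact Real.rpow_nonneg (le_of_lt ht.1.2) _
    have hnn2 : 0 ≤ ∫ t in (Ioo (N - 1) (N + 1) ∩ Ioi 0) \
        (Ioo ((N+1) - 1) ((N+1) + 1) ∩ Ioi 0), t ^ (2*lam) := by
      apply setIntegral_nonneg ((measurableSet_Ioo.inter measurableSet_Ioi).diff
        (measurableSet_Ioo.inter measurableSet_Ioi))
      intro t ht
      exact Real.rpow_nonneg (le_of_lt ht.1.2) _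
    have hrhs : C * (|((N:ℝ)+1) - N| / 1) ^ ε₀ = C := by
      have : ((N:ℝ)+1) - N = 1 := by ring
      rw [this]; simp
    rw [hrhs] at hspec
    have := key lam hlam N (by linarith)
    linarith
end

section
/- Let λ > 0 and 1 < p < ∞. If F ⊆ L^p((0,∞), x^{2λ}dx) is totally bounded, then: (a) F is bounded in norm; (b) for every ε > 0 there exists M > 0 such that ∫_M^∞ |f(x)|^p x^{2λ} dx < ε^p for all f ∈ F; (c) for every ε > 0 there exists ρ > 0 such that ∫_0^∞ |f(x+y) - f(x)|^p x^{2λ} dx < ε^p for all f ∈ F and all 0 < y < ρ. -/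
open MeasureTheory Set

noncomputable def besselMeasure (lam : ℝ) : Measure ℝ :=
  (volume.restrict (Set.Ioi (0:ℝ))).withDensity fun x => ENNReal.ofReal (x ^ (2*lam))

namespace TBN

variable {lam p : ℝ}

lemma w_meas (lam : ℝ) : Measurable fun x : ℝ => ENNReal.ofReal (x ^ (2*lam)) := by fun_prop

lemma lintegral_bessel (lam : ℝ) {G : ℝ → ENNReal} (hG : Measurable G) :
    ∫⁻ x, G x ∂(besselMeasure lam)
      = ∫⁻ x, (Ioi (0:ℝ)).indicator
          (fun t => ENNReal.ofReal (t ^ (2*lam)) * G t) x := by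
  rw [besselMeasure, lintegral_withDensity_eq_lintegral_mul _ (w_meas lam) hG,
    ← lintegral_indicator measurableSet_Ioi]
  rfl

lemma lintegral_shift_le (hlam : 0 < lam) {y : ℝ} (hy : 0 ≤ y) {G : ℝ → ENNReal}
    (hG : Measurable G) :
    ∫⁻ x, G (x + y) ∂(besselMeasure lam) ≤ ∫⁻ x, G x ∂(besselMeasure lam) := by
  rw [lintegral_bessel lam (G := fun x => G (x + y)) (by fun_prop), lintegral_bessel lam hG]
  set ψ : ℝ → ENNReal := fun u => (Ioi (0:ℝ)).indicator
      (fun t => ENNReal.ofReal (t ^ (2*lam)) * G (t + y)) (u - y) with hψ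
  have h1 : (∫⁻ x, (Ioi (0:ℝ)).indicator
      (fun t => ENNReal.ofReal (t ^ (2*lam)) * G (t + y)) x) = ∫⁻ u, ψ u := by
    rw [← lintegral_add_right_eq_self ψ y]
    congr 1 with x
    simp [hψ]
  rw [h1]
  refine lintegral_mono fun u => ?_
  by_cases h : 0 < u - y
  · have hu : 0 < u := by linarith
    rw [hψ]
    simp only [indicator_of_mem (mem_Ioi.2 h), indicator_of_mem (mem_Ioi.2 hu), sub_add_cancel]
    refine mul_le_mul_left (ENNReal.ofReal_le_ofReal ?_) _
    exact Real.rpow_le_rpow (by linarith) (by linarith) (by linarith)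
  · rw [hψ]
    simp only [indicator_of_notMem (fun hc => h (mem_Ioi.1 hc))]
    exact zero_le

lemma q_ne_zero (hp : 1 < p) : (ENNReal.ofReal p) ≠ 0 :=
  (ENNReal.ofReal_pos.2 (lt_trans one_pos hp)).ne'

lemma q_toReal (hp : 1 < p) : (ENNReal.ofReal p).toReal = p :=
  ENNReal.toReal_ofReal (le_of_lt (lt_trans one_pos hp))

lemma eLpNorm_shift_le (hlam : 0 < lam) (hp : 1 < p) {y : ℝ} (hy : 0 ≤ y) {h : ℝ → ℝ}
    (hh : Measurable h) :
    eLpNorm (fun x => h (x + y)) (ENNReal.ofReal p) (besselMeasure lam)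
      ≤ eLpNorm h (ENNReal.ofReal p) (besselMeasure lam) := by
  rw [eLpNorm_eq_lintegral_rpow_enorm_toReal (q_ne_zero hp) ENNReal.ofReal_ne_top,
    eLpNorm_eq_lintegral_rpow_enorm_toReal (q_ne_zero hp) ENNReal.ofReal_ne_top]
  refine ENNReal.rpow_le_rpow ?_ (by positivity)
  exact lintegral_shift_le hlam hy
    (G := fun x => (‖h x‖₊ : ENNReal) ^ (ENNReal.ofReal p).toReal) (by fun_prop)

lemma bm_Icc (hlam : 0 < lam) (a b : ℝ) : besselMeasure lam (Icc a b) ≠ ⊤ := by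
  rw [besselMeasure, withDensity_apply _ measurableSet_Icc,
    Measure.restrict_restrict measurableSet_Icc]
  set c : ENNReal := ENNReal.ofReal (max b 1 ^ (2*lam)) with hc
  have h1 : ∫⁻ x in Icc a b ∩ Ioi 0, ENNReal.ofReal (x ^ (2*lam)) ∂volume
      ≤ ∫⁻ _ in Icc a b ∩ Ioi 0, c ∂volume := by
    refine setLIntegral_mono measurable_const fun x hx => ?_
    refine ENNReal.ofReal_le_ofReal (Real.rpow_le_rpow (le_of_lt hx.2) ?_ (by linarith))
    exact le_trans hx.1.2 (le_max_left _ _)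
  refine ne_top_of_le_ne_top ?_ h1
  rw [setLIntegral_const]
  exact (ENNReal.mul_lt_top ENNReal.ofReal_lt_top
    (lt_of_le_of_lt (measure_mono inter_subset_left) measure_Icc_lt_top)).ne

lemma bm_fmc (hlam : 0 < lam) : IsFiniteMeasureOnCompacts (besselMeasure lam) := by
  constructor
  intro K hK
  obtain ⟨r, hr⟩ := hK.isBounded.subset_closedBall 0
  rw [Real.closedBall_eq_Icc, zero_sub, zero_add] at hr
  exact lt_of_le_of_lt (measure_mono hr) (lt_top_iff_ne_top.2 (bm_Icc hlam _ _))


lemma tail_small (hlam : 0 < lam) (hp : 1 < p) [Fact ((1 : ENNReal) ≤ ENNReal.ofReal p)]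
    (f : Lp ℝ (ENNReal.ofReal p) (besselMeasure lam)) {ε : ℝ} (hε : 0 < ε) :
    ∃ M : ℝ, 0 < M ∧
      eLpNorm f (ENNReal.ofReal p) ((besselMeasure lam).restrict (Ioi M))
        < ENNReal.ofReal ε := by
  have hp0 : (0:ℝ) < p := lt_trans one_pos hp
  set G : ℝ → ENNReal := fun x => (‖(f : ℝ → ℝ) x‖₊ : ENNReal) ^ (ENNReal.ofReal p).toReal
    with hG
  have hGm : Measurable G := by
    have := (Lp.stronglyMeasurable f).measurable
    fun_prop
  set ν := (besselMeasure lam).withDensity G with hν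
  have hνt : ν (Ioi (0:ℝ)) ≠ ⊤ := by
    refine ne_top_of_le_ne_top ?_ (measure_mono (subset_univ _))
    rw [hν, withDensity_apply _ MeasurableSet.univ, Measure.restrict_univ]
    exact (lintegral_rpow_enorm_lt_top_of_eLpNorm_lt_top (q_ne_zero hp)
      ENNReal.ofReal_ne_top (Lp.eLpNorm_lt_top f)).ne
  have htend : Filter.Tendsto (fun n : ℕ => ν (Ioi (n:ℝ))) Filter.atTop (nhds 0) := by
    have h0 : ⋂ n : ℕ, Ioi ((n:ℝ)) = ∅ := by
      ext x
      simp only [mem_iInter, mem_Ioi, mem_empty_iff_false, iff_false, not_forall, not_lt]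
      obtain ⟨n, hn⟩ := exists_nat_gt x
      exact ⟨n, hn.le⟩
    have := tendsto_measure_iInter_atTop (μ := ν)
      (s := fun n : ℕ => Ioi ((n:ℝ)))
      (fun n => measurableSet_Ioi.nullMeasurableSet)
      (fun m n hmn => Ioi_subset_Ioi (by exact_mod_cast hmn))
      ⟨0, by simpa using hνt⟩
    rwa [h0, measure_empty] at this
  have hpos : (0:ENNReal) < ENNReal.ofReal ε ^ p := by
    exact ENNReal.rpow_pos (ENNReal.ofReal_pos.2 hε) ENNReal.ofReal_ne_top
  obtain ⟨n, hn⟩ := (htend.eventually_lt_const hpos).exists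
  refine ⟨(n:ℝ) + 1, by positivity, ?_⟩
  have hmono : eLpNorm f (ENNReal.ofReal p) ((besselMeasure lam).restrict (Ioi ((n:ℝ)+1)))
      ≤ eLpNorm f (ENNReal.ofReal p) ((besselMeasure lam).restrict (Ioi (n:ℝ))) :=
    eLpNorm_mono_measure _ (Measure.restrict_mono (Ioi_subset_Ioi (by linarith)) le_rfl)
  refine lt_of_le_of_lt hmono ?_
  rw [eLpNorm_eq_lintegral_rpow_enorm_toReal (q_ne_zero hp) ENNReal.ofReal_ne_top]
  simp only [enorm_eq_nnnorm]
  have hint : ∫⁻ x in Ioi ((n:ℝ)), G x ∂(besselMeasure lam) = ν (Ioi ((n:ℝ))) :=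
    (withDensity_apply _ measurableSet_Ioi).symm
  have hgoal : ∫⁻ x in Ioi ((n:ℝ)), (‖(f : ℝ → ℝ) x‖₊ : ENNReal) ^ (ENNReal.ofReal p).toReal
      ∂(besselMeasure lam) = ν (Ioi ((n:ℝ))) := hint
  rw [hgoal, q_toReal hp]
  have : ν (Ioi ((n:ℝ))) ^ (1/p) < (ENNReal.ofReal ε ^ p) ^ (1/p) :=
    ENNReal.rpow_lt_rpow hn (by positivity)
  rwa [← ENNReal.rpow_mul, mul_one_div_cancel hp0.ne', ENNReal.rpow_one] at this


lemma cc_shift_small (hlam : 0 < lam) (hp : 1 < p) {g : ℝ → ℝ} (hg : Continuous g)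
    (hgs : HasCompactSupport g) {ε : ℝ} (hε : 0 < ε) :
    ∃ ρ : ℝ, 0 < ρ ∧ ∀ y : ℝ, 0 < y → y < ρ →
      eLpNorm (fun x => g (x + y) - g x) (ENNReal.ofReal p) (besselMeasure lam)
        ≤ ENNReal.ofReal ε := by
  obtain ⟨R, hR⟩ := hgs.isBounded.subset_closedBall 0
  rw [Real.closedBall_eq_Icc, zero_sub, zero_add] at hR
  set K : Set ℝ := Icc (-R - 1) (R + 1) with hK
  have hKfin : besselMeasure lam K ≠ ⊤ := bm_Icc hlam _ _
  set B : ℝ := ((besselMeasure lam K) ^ (ENNReal.ofReal p).toReal⁻¹).toReal with hB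
  have hB0 : 0 ≤ B := ENNReal.toReal_nonneg
  set C : ℝ := ε / (B + 1) with hC
  have hC0 : 0 < C := by positivity
  obtain ⟨δ, hδ0, hδ⟩ := Metric.uniformContinuous_iff.1
    (hgs.uniformContinuous_of_continuous hg) C hC0
  refine ⟨min δ 1, by positivity, ?_⟩
  intro y hy0 hy
  have hyδ : y < δ := lt_of_lt_of_le hy (min_le_left _ _)
  have hy1 : y < 1 := lt_of_lt_of_le hy (min_le_right _ _)
  set Δ : ℝ → ℝ := fun x => g (x + y) - g x with hΔ
  have hbd : ∀ x, ‖Δ x‖ ≤ C := by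
    intro x
    have : dist (g (x + y)) (g x) < C := by
      refine hδ ?_
      rw [Real.dist_eq]
      simpa [abs_of_pos hy0] using hyδ
    simpa [hΔ, Real.dist_eq, Real.norm_eq_abs] using this.le
  have hsupp : ∀ x ∉ K, Δ x = 0 := by
    intro x hx
    have hxg : g x = 0 := by
      refine image_eq_zero_of_notMem_tsupport fun hc => hx ?_
      have := hR hc
      exact ⟨by linarith [this.1], by linarith [this.2]⟩
    have hxyg : g (x + y) = 0 := by
      refine image_eq_zero_of_notMem_tsupport fun hc => hx ?_
      have := hR hc
      constructor <;> [linarith [this.1]; linarith [this.2]]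
    simp [hΔ, hxg, hxyg]
  have hind : K.indicator Δ = Δ := by
    refine indicator_eq_self.2 fun x hx => ?_
    by_contra hc
    exact hx (hsupp x hc)
  calc eLpNorm Δ (ENNReal.ofReal p) (besselMeasure lam)
      = eLpNorm Δ (ENNReal.ofReal p) ((besselMeasure lam).restrict K) := by
        rw [← hind, eLpNorm_indicator_eq_eLpNorm_restrict measurableSet_Icc, hind]
    _ ≤ ((besselMeasure lam).restrict K) univ ^ (ENNReal.ofReal p).toReal⁻¹
          * ENNReal.ofReal C := eLpNorm_le_of_ae_bound (Filter.Eventually.of_forall hbd)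
    _ ≤ ENNReal.ofReal ε := by
        rw [Measure.restrict_apply_univ]
        have hfin : (besselMeasure lam K) ^ (ENNReal.ofReal p).toReal⁻¹ ≠ ⊤ :=
          ENNReal.rpow_ne_top_of_nonneg (by positivity) hKfin
        rw [← ENNReal.ofReal_toReal hfin, ← hB, ← ENNReal.ofReal_mul hB0]
        refine ENNReal.ofReal_le_ofReal ?_
        rw [hC]
        rw [div_eq_iff (by positivity : (B:ℝ) + 1 ≠ 0)] at *
        nlinarith

lemma lp_shift_small (hlam : 0 < lam) (hp : 1 < p)
    [Fact ((1 : ENNReal) ≤ ENNReal.ofReal p)]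
    (f : Lp ℝ (ENNReal.ofReal p) (besselMeasure lam)) {ε : ℝ} (hε : 0 < ε) :
    ∃ ρ : ℝ, 0 < ρ ∧ ∀ y : ℝ, 0 < y → y < ρ →
      eLpNorm (fun x => (f : ℝ → ℝ) (x + y) - (f : ℝ → ℝ) x)
        (ENNReal.ofReal p) (besselMeasure lam) < ENNReal.ofReal ε := by
  haveI : IsFiniteMeasureOnCompacts (besselMeasure lam) := bm_fmc hlam
  haveI : (besselMeasure lam).Regular := inferInstance
  have hε4 : (0:ℝ) < ε / 4 := by linarith
  obtain ⟨g, hgs, hfg, hgc, _⟩ := (Lp.memLp f).exists_hasCompactSupport_eLpNorm_sub_le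
    ENNReal.ofReal_ne_top (ε := ENNReal.ofReal (ε/4)) (ENNReal.ofReal_pos.2 hε4).ne'
  obtain ⟨ρ, hρ0, hρ⟩ := cc_shift_small hlam hp hgc hgs hε4
  refine ⟨ρ, hρ0, ?_⟩
  intro y hy0 hyρ
  have hfm : Measurable ((f : ℝ → ℝ)) := (Lp.stronglyMeasurable f).measurable
  have hgm : Measurable g := hgc.measurable
  have hkey : (fun x => (f : ℝ → ℝ) (x + y) - (f : ℝ → ℝ) x)
      = fun x => (((f : ℝ → ℝ) - g) (x + y))
        + ((g (x + y) - g x) + (-(((f : ℝ → ℝ) - g) x))) := by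
    funext x
    simp only [Pi.sub_apply]
    ring
  have hA : eLpNorm (fun x => (((f : ℝ → ℝ) - g) (x + y))) (ENNReal.ofReal p)
      (besselMeasure lam) ≤ ENNReal.ofReal (ε/4) :=
    le_trans (eLpNorm_shift_le hlam hp hy0.le (hfm.sub hgm)) hfg
  have hB : eLpNorm (fun x => g (x + y) - g x) (ENNReal.ofReal p) (besselMeasure lam)
      ≤ ENNReal.ofReal (ε/4) := hρ y hy0 hyρ
  have hCk : eLpNorm (fun x => -(((f : ℝ → ℝ) - g) x)) (ENNReal.ofReal p) (besselMeasure lam)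
      ≤ ENNReal.ofReal (ε/4) := by
    rw [show (fun x => -(((f : ℝ → ℝ) - g) x)) = -((f : ℝ → ℝ) - g) from rfl, eLpNorm_neg]
    exact hfg
  have h1 : eLpNorm (fun x => (f : ℝ → ℝ) (x + y) - (f : ℝ → ℝ) x) (ENNReal.ofReal p)
      (besselMeasure lam)
      ≤ ENNReal.ofReal (ε/4) + (ENNReal.ofReal (ε/4) + ENNReal.ofReal (ε/4)) := by
    rw [hkey]
    refine le_trans (eLpNorm_add_le ?_ ?_ Fact.out) ?_
    · exact ((hfm.sub hgm).comp (measurable_id.add_const y)).aestronglyMeasurable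
    · exact (((hgm.comp (measurable_id.add_const y)).sub hgm).add
        ((hfm.sub hgm).neg)).aestronglyMeasurable
    refine add_le_add hA (le_trans (eLpNorm_add_le ?_ ?_ Fact.out) (add_le_add hB hCk))
    · exact ((hgm.comp (measurable_id.add_const y)).sub hgm).aestronglyMeasurable
    · exact ((hfm.sub hgm).neg).aestronglyMeasurable
  refine lt_of_le_of_lt h1 ?_
  rw [← ENNReal.ofReal_add (by linarith) (by linarith), ← ENNReal.ofReal_add (by linarith)
    (by linarith)]
  exact ENNReal.ofReal_lt_ofReal_iff hε |>.2 (by linarith)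

lemma integral_lt_of_eLpNorm_lt (hp : 1 < p) {ν : Measure ℝ} {h : ℝ → ℝ}
    (hm : Measurable h) {ε : ℝ} (hε : 0 < ε)
    (hlt : eLpNorm h (ENNReal.ofReal p) ν < ENNReal.ofReal ε) :
    ∫ x, |h x| ^ p ∂ν < ε ^ p := by
  have hp0 : (0:ℝ) < p := lt_trans one_pos hp
  have heq : ∫ x, |h x| ^ p ∂ν
      = (∫⁻ x, (‖h x‖₊ : ENNReal) ^ p ∂ν).toReal := by
    rw [integral_eq_lintegral_of_nonneg_ae
      (Filter.Eventually.of_forall fun x => Real.rpow_nonneg (abs_nonneg _) p)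
      (by fun_prop : Measurable fun x => |h x| ^ p).aestronglyMeasurable]
    congr 1
    refine lintegral_congr fun x => ?_
    rw [← Real.norm_eq_abs, ← enorm_eq_nnnorm, ← ofReal_norm,
      ← ENNReal.ofReal_rpow_of_nonneg (norm_nonneg _) hp0.le]
  rw [heq]
  have h2 : ∫⁻ x, (‖h x‖₊ : ENNReal) ^ p ∂ν < ENNReal.ofReal (ε ^ p) := by
    have h3 := ENNReal.rpow_lt_rpow hlt hp0
    rw [eLpNorm_eq_lintegral_rpow_enorm_toReal (q_ne_zero hp) ENNReal.ofReal_ne_top,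
      q_toReal hp, ← ENNReal.rpow_mul, one_div_mul_cancel hp0.ne', ENNReal.rpow_one] at h3
    rwa [ENNReal.ofReal_rpow_of_nonneg hε.le hp0.le] at h3
  exact ENNReal.toReal_lt_of_lt_ofReal h2

lemma eLpNorm_lt_of_norm_lt [Fact ((1 : ENNReal) ≤ ENNReal.ofReal p)]
    (f : Lp ℝ (ENNReal.ofReal p) (besselMeasure lam)) {r : ℝ} (h : ‖f‖ < r) :
    eLpNorm (f : ℝ → ℝ) (ENNReal.ofReal p) (besselMeasure lam) < ENNReal.ofReal r := by
  rw [Lp.norm_def] at h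
  exact (ENNReal.lt_ofReal_iff_toReal_lt (Lp.eLpNorm_ne_top f)).2 h

lemma finset_bounds {α : Type*} (t : Finset α) (m : α → ℝ) :
    (∃ M : ℝ, 0 < M ∧ ∀ a ∈ t, m a ≤ M) ∧ (∃ ρ : ℝ, 0 < ρ ∧ ∀ a ∈ t, (0 < m a) → ρ ≤ m a) := by
  classical
  constructor
  · induction t using Finset.induction_on with
    | empty => exact ⟨1, one_pos, by simp⟩
    | @insert b s hb ih =>
      obtain ⟨M, hM0, hM⟩ := ih
      refine ⟨max M (m b), lt_of_lt_of_le hM0 (le_max_left _ _), ?_⟩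
      intro a ha
      rcases Finset.mem_insert.1 ha with rfl | ha
      · exact le_max_right _ _
      · exact le_trans (hM a ha) (le_max_left _ _)
  · induction t using Finset.induction_on with
    | empty => exact ⟨1, one_pos, by simp⟩
    | @insert b s hbs ih =>
      obtain ⟨ρ, hρ0, hρ⟩ := ih
      by_cases hb : 0 < m b
      · refine ⟨min ρ (m b), lt_min hρ0 hb, ?_⟩
        intro a ha _
        rcases Finset.mem_insert.1 ha with rfl | ha
        · exact min_le_right _ _
        · exact le_trans (min_le_left _ _) (hρ a ha ‹_›)
      · refine ⟨ρ, hρ0, ?_⟩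
        intro a ha hma
        rcases Finset.mem_insert.1 ha with rfl | ha
        · exact absurd hma hb
        · exact hρ a ha hma
end TBN

theorem totallyBounded_necessary (lam p : ℝ) (hlam : 0 < lam) (hp : 1 < p)
    [Fact ((1 : ENNReal) ≤ ENNReal.ofReal p)]
    (F : Set (Lp ℝ (ENNReal.ofReal p) (besselMeasure lam)))
    (hF : TotallyBounded F) :
    (∃ C : ℝ, ∀ f ∈ F, ‖f‖ ≤ C) ∧
    (∀ ε > (0:ℝ), ∃ M > (0:ℝ), ∀ f ∈ F,
      (∫ x in Set.Ioi M, |(f : ℝ → ℝ) x| ^ p ∂(besselMeasure lam)) < ε ^ p) ∧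
    (∀ ε > (0:ℝ), ∃ ρ > (0:ℝ), ∀ f ∈ F, ∀ y : ℝ, 0 < y → y < ρ →
      (∫ x, |(f : ℝ → ℝ) (x + y) - (f : ℝ → ℝ) x| ^ p ∂(besselMeasure lam)) < ε ^ p) := by
  refine ⟨isBounded_iff_forall_norm_le.1 hF.isBounded, ?_, ?_⟩
  · -- tails
    intro ε hε
    have hε2 : (0:ℝ) < ε / 2 := by linarith
    obtain ⟨t, htfin, htcov⟩ := Metric.totallyBounded_iff.1 hF (ε/2) hε2
    choose Mg hMg0 hMg using fun g : Lp ℝ (ENNReal.ofReal p) (besselMeasure lam) =>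
      TBN.tail_small hlam hp g hε2
    obtain ⟨M, hM0, hMle⟩ := (TBN.finset_bounds htfin.toFinset Mg).1
    refine ⟨M, hM0, ?_⟩
    intro f hf
    obtain ⟨g, hgt, hfgb⟩ : ∃ g ∈ t, f ∈ Metric.ball g (ε/2) := by
      simpa using htcov hf
    have hdist : ‖f - g‖ < ε/2 := by rwa [Metric.mem_ball, dist_eq_norm] at hfgb
    have hfgs : eLpNorm ((f : ℝ → ℝ) - (g : ℝ → ℝ)) (ENNReal.ofReal p) (besselMeasure lam)
        < ENNReal.ofReal (ε/2) := by
      have := TBN.eLpNorm_lt_of_norm_lt (f - g) hdist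
      rwa [eLpNorm_congr_ae (Lp.coeFn_sub f g)] at this
    have hfm := (Lp.stronglyMeasurable f).measurable
    have hgm := (Lp.stronglyMeasurable g).measurable
    have htail : eLpNorm (f : ℝ → ℝ) (ENNReal.ofReal p)
        ((besselMeasure lam).restrict (Ioi M)) < ENNReal.ofReal ε := by
      have hsplit : (f : ℝ → ℝ) = ((f : ℝ → ℝ) - (g : ℝ → ℝ)) + (g : ℝ → ℝ) := by
        funext x; simp
      have h1 : eLpNorm (f : ℝ → ℝ) (ENNReal.ofReal p)
            ((besselMeasure lam).restrict (Ioi M))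
          ≤ eLpNorm ((f : ℝ → ℝ) - (g : ℝ → ℝ)) (ENNReal.ofReal p)
              ((besselMeasure lam).restrict (Ioi M))
            + eLpNorm (g : ℝ → ℝ) (ENNReal.ofReal p)
              ((besselMeasure lam).restrict (Ioi M)) := by
        nth_rewrite 1 [hsplit]
        exact eLpNorm_add_le (hfm.sub hgm).aestronglyMeasurable
          hgm.aestronglyMeasurable Fact.out
      have h2 : eLpNorm ((f : ℝ → ℝ) - (g : ℝ → ℝ)) (ENNReal.ofReal p)
          ((besselMeasure lam).restrict (Ioi M)) < ENNReal.ofReal (ε/2) :=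
        lt_of_le_of_lt (eLpNorm_mono_measure _ Measure.restrict_le_self) hfgs
      have h3 : eLpNorm (g : ℝ → ℝ) (ENNReal.ofReal p)
          ((besselMeasure lam).restrict (Ioi M)) < ENNReal.ofReal (ε/2) := by
        refine lt_of_le_of_lt (eLpNorm_mono_measure _
          (Measure.restrict_mono (Ioi_subset_Ioi ?_) le_rfl)) (hMg g)
        exact hMle g (htfin.mem_toFinset.2 hgt)
      refine lt_of_le_of_lt h1 (lt_of_lt_of_le (ENNReal.add_lt_add h2 h3) ?_)
      rw [← ENNReal.ofReal_add (by linarith) (by linarith)]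
      simp [add_halves]
    exact TBN.integral_lt_of_eLpNorm_lt hp hfm hε htail
  · -- translations
    intro ε hε
    have hε4 : (0:ℝ) < ε / 4 := by linarith
    obtain ⟨t, htfin, htcov⟩ := Metric.totallyBounded_iff.1 hF (ε/4) hε4
    choose ρg hρg0 hρg using fun g : Lp ℝ (ENNReal.ofReal p) (besselMeasure lam) =>
      TBN.lp_shift_small hlam hp g hε4
    obtain ⟨ρ, hρ0, hρle⟩ := (TBN.finset_bounds htfin.toFinset ρg).2
    refine ⟨ρ, hρ0, ?_⟩
    intro f hf y hy0 hyρ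
    obtain ⟨g, hgt, hfgb⟩ : ∃ g ∈ t, f ∈ Metric.ball g (ε/4) := by
      simpa using htcov hf
    have hdist : ‖f - g‖ < ε/4 := by rwa [Metric.mem_ball, dist_eq_norm] at hfgb
    have hfgs : eLpNorm ((f : ℝ → ℝ) - (g : ℝ → ℝ)) (ENNReal.ofReal p) (besselMeasure lam)
        < ENNReal.ofReal (ε/4) := by
      have := TBN.eLpNorm_lt_of_norm_lt (f - g) hdist
      rwa [eLpNorm_congr_ae (Lp.coeFn_sub f g)] at this
    have hfm := (Lp.stronglyMeasurable f).measurable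
    have hgm := (Lp.stronglyMeasurable g).measurable
    have hyg : y < ρg g := lt_of_lt_of_le hyρ
      (hρle g (htfin.mem_toFinset.2 hgt) (hρg0 g))
    have hB := hρg g y hy0 hyg
    have hA : eLpNorm (fun x => (((f : ℝ → ℝ) - (g : ℝ → ℝ)) (x + y))) (ENNReal.ofReal p)
        (besselMeasure lam) < ENNReal.ofReal (ε/4) :=
      lt_of_le_of_lt (TBN.eLpNorm_shift_le hlam hp hy0.le (hfm.sub hgm)) hfgs
    have hC : eLpNorm (fun x => -((((f : ℝ → ℝ) - (g : ℝ → ℝ)) x))) (ENNReal.ofReal p)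
        (besselMeasure lam) < ENNReal.ofReal (ε/4) := by
      rw [show (fun x => -((((f : ℝ → ℝ) - (g : ℝ → ℝ)) x)))
        = -((f : ℝ → ℝ) - (g : ℝ → ℝ)) from rfl, eLpNorm_neg]
      exact hfgs
    have hkey : (fun x => (f : ℝ → ℝ) (x + y) - (f : ℝ → ℝ) x)
        = fun x => (((f : ℝ → ℝ) - (g : ℝ → ℝ)) (x + y))
          + (((g : ℝ → ℝ) (x + y) - (g : ℝ → ℝ) x)
            + (-(((f : ℝ → ℝ) - (g : ℝ → ℝ)) x))) := by
      funext x
      simp only [Pi.sub_apply]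
      ring
    have h1 : eLpNorm (fun x => (f : ℝ → ℝ) (x + y) - (f : ℝ → ℝ) x) (ENNReal.ofReal p)
        (besselMeasure lam)
        ≤ eLpNorm (fun x => (((f : ℝ → ℝ) - (g : ℝ → ℝ)) (x + y))) (ENNReal.ofReal p)
            (besselMeasure lam)
          + (eLpNorm (fun x => (g : ℝ → ℝ) (x + y) - (g : ℝ → ℝ) x) (ENNReal.ofReal p)
              (besselMeasure lam)
            + eLpNorm (fun x => -((((f : ℝ → ℝ) - (g : ℝ → ℝ)) x))) (ENNReal.ofReal p)
              (besselMeasure lam)) := by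
      rw [hkey]
      refine le_trans (eLpNorm_add_le ?_ ?_ Fact.out) ?_
      · exact ((hfm.sub hgm).comp (measurable_id.add_const y)).aestronglyMeasurable
      · exact (((hgm.comp (measurable_id.add_const y)).sub hgm).add
          ((hfm.sub hgm).neg)).aestronglyMeasurable
      refine add_le_add le_rfl (eLpNorm_add_le ?_ ?_ Fact.out)
      · exact ((hgm.comp (measurable_id.add_const y)).sub hgm).aestronglyMeasurable
      · exact ((hfm.sub hgm).neg).aestronglyMeasurable
    have hfinal : eLpNorm (fun x => (f : ℝ → ℝ) (x + y) - (f : ℝ → ℝ) x) (ENNReal.ofReal p)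
        (besselMeasure lam) < ENNReal.ofReal ε := by
      refine lt_of_le_of_lt h1 (lt_of_lt_of_le (ENNReal.add_lt_add hA
        (ENNReal.add_lt_add hB hC)) ?_)
      rw [← ENNReal.ofReal_add (by linarith) (by linarith),
        ← ENNReal.ofReal_add (by linarith) (by linarith)]
      exact ENNReal.ofReal_le_ofReal (by linarith)
    exact TBN.integral_lt_of_eLpNorm_lt hp
      ((hfm.comp (measurable_id.add_const y)).sub hfm) hε hfinal
end
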